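/- arXiv:2405.05102 — 9 statements merged into one kernel-verified Lean document; each statement's English description precedes it below -/
import Mathlib

section
/- For every integer i ≥ 1, the series Σ_{j=i+1}^∞ b(j)/((j−i)·h_{j−1}) converges and equals b(i); that is, the sequence (b(i)) satisfies b(i) = Σ_{j>i} b(j)·p(j,i) for all i ≥ 1, where p(j,i) = 1/((j−i)·h_{j−1}). -/
open Real Filter Topology MeasureTheory

/-- The harmonic number `h n = ∑_{i=1}^n 1/i`, with `h 0 = 0`. -/
noncomputable def harmonic' (n : ℕ) : ℝ := ∑ i ∈ Finset.Icc 1 n, (1 : ℝ) / i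

/-- One-step transition probabilities of the harmonic descent chain,
`p j i = 1/((j-i)·h_{j-1})` for `1 ≤ i < j`. -/
noncomputable def hdP (j i : ℕ) : ℝ := 1 / (((j : ℝ) - (i : ℝ)) * harmonic' (j - 1))

/-- `b 1 = 1` and `b i = 6 h_{i-1} / (π² (i-1))` for `i ≥ 2`. -/
noncomputable def hdB (i : ℕ) : ℝ :=
  if i = 1 then 1 else 6 * harmonic' (i - 1) / (Real.pi ^ 2 * ((i : ℝ) - 1))

lemma tele1 (m : ℕ) : HasSum (fun n : ℕ => 1/((n:ℝ)+m+1) - 1/((n:ℝ)+m+2)) (1/((m:ℝ)+1)) := by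
  rw [hasSum_iff_tendsto_nat_of_nonneg]
  · have key : ∀ N : ℕ, ∑ n ∈ Finset.range N, (1/((n:ℝ)+m+1) - 1/((n:ℝ)+m+2))
        = 1/((m:ℝ)+1) - 1/((N:ℝ)+m+1) := by
      intro N
      have h := Finset.sum_range_sub' (f := fun n : ℕ => 1/((n:ℝ)+m+1)) N
      simp only [Nat.cast_add, Nat.cast_one, Nat.cast_zero] at h
      rw [show (1:ℝ)/(↑m+1) = 1/(0+↑m+1) by ring_nf, ← h]
      apply Finset.sum_congr rfl
      intro n _
      ring_nf
    simp only [key]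
    have h0 : Tendsto (fun N : ℕ => 1/((N:ℝ)+m+1)) atTop (𝓝 0) := by
      have := Tendsto.comp tendsto_inv_atTop_zero
        (tendsto_atTop_add_const_right atTop ((m:ℝ)+1) tendsto_natCast_atTop_atTop)
      simpa [Function.comp_def, one_div, add_assoc] using this
    simpa using (tendsto_const_nhds.sub h0)
  · intro n
    have h1 : (0:ℝ) < (n:ℝ)+m+1 := by positivity
    rw [sub_nonneg]
    apply one_div_le_one_div_of_le h1; linarith

lemma harmonic'_eq_range (n : ℕ) : harmonic' n = ∑ m ∈ Finset.range n, 1/((m:ℝ)+1) := by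
  induction n with
  | zero => simp [harmonic']
  | succ k ih =>
    rw [Finset.sum_range_succ, ← ih]
    unfold harmonic'
    rw [Finset.sum_Icc_succ_top (by omega)]
    push_cast; ring

lemma harmonic'_pos {n : ℕ} (hn : 1 ≤ n) : 0 < harmonic' n := by
  rw [harmonic'_eq_range]
  apply Finset.sum_pos
  · intro m _; positivity
  · exact ⟨0, Finset.mem_range.mpr hn⟩

lemma tele_harmonic {i : ℕ} (hi : 2 ≤ i) :
    HasSum (fun n : ℕ => 1/((n:ℝ)+1) - 1/((n:ℝ)+i)) (harmonic' (i-1)) := by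
  have h := hasSum_sum (s := Finset.range (i-1))
    (f := fun (m : ℕ) (n : ℕ) => 1/((n:ℝ)+m+1) - 1/((n:ℝ)+m+2))
    (a := fun (m : ℕ) => 1/((m:ℝ)+1)) (fun m _ => tele1 m)
  rw [← harmonic'_eq_range] at h
  convert h using 2 with n
  have h2 := Finset.sum_range_sub' (f := fun m : ℕ => 1/((n:ℝ)+m+1)) (i-1)
  simp only [Nat.cast_add, Nat.cast_one, Nat.cast_zero] at h2
  have e : ∑ m ∈ Finset.range (i-1), ((1:ℝ)/((n:ℝ)+m+1) - 1/((n:ℝ)+m+2))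
      = ∑ x ∈ Finset.range (i-1), ((1:ℝ)/((n:ℝ)+x+1) - 1/((n:ℝ)+(x+1)+1)) :=
    Finset.sum_congr rfl (fun m _ => by ring_nf)
  rw [e, h2, Nat.cast_sub (by omega : 1 ≤ i)]
  push_cast
  ring

theorem hdB_harmonic_equation (i : ℕ) (hi : 1 ≤ i) :
    HasSum (fun j : ℕ => if i < j then hdB j * hdP j i else 0) (hdB i) := by
  set f : ℕ → ℝ := fun j => if i < j then hdB j * hdP j i else 0 with hf
  have hterm : ∀ n : ℕ, f (n + (i+1)) = (6/Real.pi^2) * (1/((((n:ℝ))+i)*((n:ℝ)+1))) := by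
    intro n
    have hlt : i < n + (i+1) := by omega
    have hne1 : n + (i+1) ≠ 1 := by omega
    have hsub : n + (i+1) - 1 = n + i := by omega
    have hH : harmonic' (n+i) ≠ 0 := ne_of_gt (harmonic'_pos (by omega))
    simp only [hf, if_pos hlt, hdB, hdP, if_neg hne1, hsub]
    have hc : ((n + (i+1) : ℕ) : ℝ) = (n:ℝ) + i + 1 := by push_cast; ring
    rw [hc, show (n:ℝ)+↑i+1-1 = ↑n+↑i by ring, show (n:ℝ)+↑i+1-↑i = ↑n+1 by ring]
    have hni : ((n:ℝ) + i) ≠ 0 := by positivity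
    have hn1 : ((n:ℝ) + 1) ≠ 0 := by positivity
    have hpi : (Real.pi : ℝ) ≠ 0 := Real.pi_ne_zero
    field_simp
  have hmain : HasSum (fun n : ℕ => f (n + (i+1))) (hdB i) := by
    rcases eq_or_lt_of_le hi with h1 | h2
    · -- i = 1
      have hb : HasSum (fun n : ℕ => (1:ℝ)/((n+1 : ℕ):ℝ)^2) (Real.pi^2/6) := by
        have := (hasSum_nat_add_iff' (f := fun n : ℕ => (1:ℝ)/(n:ℝ)^2) 1).mpr hasSum_zeta_two
        simpa using this
      have := hb.mul_left (6/Real.pi^2)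
      have hval : (6/Real.pi^2) * (Real.pi^2/6) = 1 := by
        field_simp
      rw [hval] at this
      have hb1 : hdB i = 1 := by simp [hdB, ← h1]
      have heq : (fun n : ℕ => f (n + (i+1)))
          = fun n : ℕ => (6/Real.pi^2) * ((1:ℝ)/((n+1:ℕ):ℝ)^2) := by
        funext n
        rw [hterm n, ← h1]
        push_cast
        ring_nf
      rw [hb1, heq]
      exact this
    · -- i ≥ 2
      have hi2 : 2 ≤ i := h2
      have ht := (tele_harmonic hi2).mul_left (6/(Real.pi^2*((i:ℝ)-1)))
      have hbi : hdB i = (6/(Real.pi^2*((i:ℝ)-1))) * harmonic' (i-1) := by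
        rw [hdB, if_neg (by omega)]
        ring
      have heq : (fun n : ℕ => f (n + (i+1)))
          = fun n : ℕ => (6/(Real.pi^2*((i:ℝ)-1))) * (1/((n:ℝ)+1) - 1/((n:ℝ)+i)) := by
        funext n
        rw [hterm n]
        have hi1 : ((i:ℝ)-1) ≠ 0 := by
          have : (2:ℝ) ≤ (i:ℝ) := by exact_mod_cast hi2
          linarith
        have hni : ((n:ℝ)+i) ≠ 0 := by positivity
        have hn1 : ((n:ℝ)+1) ≠ 0 := by positivity
        have hpi := Real.pi_ne_zero
        field_simp
        ring
      rw [hbi, heq]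
      exact ht
  have hs := (hasSum_nat_add_iff (f := f) (i+1)).mp hmain
  have hz : ∑ j ∈ Finset.range (i+1), f j = 0 := by
    apply Finset.sum_eq_zero
    intro j hj
    simp only [hf]
    rw [if_neg]
    have := Finset.mem_range.mp hj
    omega
  rwa [hz, add_zero] at hs
end

section
/- For every integer i ≥ 2, the series Σ_{j=i+1}^∞ 1/((j−i)·(j−1)) converges and equals h_{i−1}/(i−1). -/
open Real Filter Topology MeasureTheory

lemma tele (c : ℕ) : HasSum (fun k : ℕ => 1/((k:ℝ)+c+1) - 1/((k:ℝ)+c+2)) (1/((c:ℝ)+1)) := by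
  have hpos : ∀ k : ℕ, (0:ℝ) < (k:ℝ)+c+1 := by intro k; positivity
  have hnn : ∀ k : ℕ, 0 ≤ 1/((k:ℝ)+c+1) - 1/((k:ℝ)+c+2) := by
    intro k
    have : (1:ℝ)/((k:ℝ)+c+2) ≤ 1/((k:ℝ)+c+1) := by
      apply one_div_le_one_div_of_le (hpos k); linarith
    linarith
  rw [hasSum_iff_tendsto_nat_of_nonneg hnn]
  have hsum : ∀ n, ∑ k ∈ Finset.range n, (1/((k:ℝ)+c+1) - 1/((k:ℝ)+c+2))
      = 1/((c:ℝ)+1) - 1/((n:ℝ)+c+1) := by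
    intro n
    have h := Finset.sum_range_sub' (fun k : ℕ => 1/((k:ℝ)+c+1)) n
    have e : ∀ k : ℕ, 1/((k:ℝ)+c+1) - 1/((k:ℝ)+c+2)
        = (fun k : ℕ => 1/((k:ℝ)+c+1)) k - (fun k : ℕ => 1/((k:ℝ)+c+1)) (k+1) := by
      intro k; push_cast; ring_nf
    rw [Finset.sum_congr rfl fun k _ => e k, h]
    norm_num
  simp only [hsum]
  have h2 : Tendsto (fun n : ℕ => 1/((n:ℝ)+c+1)) atTop (𝓝 0) := by
    have : Tendsto (fun n : ℕ => (n:ℝ)+c+1) atTop atTop := by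
      apply tendsto_atTop_add_const_right
      apply tendsto_atTop_add_const_right
      exact tendsto_natCast_atTop_atTop
    simpa [one_div, Function.comp_def] using tendsto_inv_atTop_zero.comp this
  simpa using tendsto_const_nhds.sub h2

theorem sum_inv_sub_mul (i : ℕ) (hi : 2 ≤ i) :
    HasSum (fun j : ℕ => if i < j then 1 / (((j : ℝ) - i) * ((j : ℝ) - 1)) else 0)
      (harmonic' (i - 1) / ((i : ℝ) - 1)) := by
  have hi2 : (2:ℝ) ≤ (i:ℝ) := by exact_mod_cast hi
  have hi1' : (i:ℝ) - 1 ≠ 0 := by linarith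
  have hcast : ((i - 1 : ℕ) : ℝ) = (i:ℝ) - 1 := by
    have := Nat.one_le_of_lt hi; push_cast [this]; ring
  -- sum of telescopes
  have h1 : HasSum (fun k : ℕ => ∑ m ∈ Finset.range (i-1), (1/((k:ℝ)+m+1) - 1/((k:ℝ)+m+2)))
      (∑ m ∈ Finset.range (i-1), 1/((m:ℝ)+1)) :=
    hasSum_sum fun m _ => tele m
  -- collapse inner sum
  have h2 : ∀ k : ℕ, ∑ m ∈ Finset.range (i-1), (1/((k:ℝ)+m+1) - 1/((k:ℝ)+m+2))
      = 1/((k:ℝ)+1) - 1/((k:ℝ)+i) := by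
    intro k
    have h := Finset.sum_range_sub' (fun m : ℕ => 1/((k:ℝ)+m+1)) (i-1)
    have e : ∀ m : ℕ, 1/((k:ℝ)+m+1) - 1/((k:ℝ)+m+2)
        = (fun m : ℕ => 1/((k:ℝ)+m+1)) m - (fun m : ℕ => 1/((k:ℝ)+m+1)) (m+1) := by
      intro m; push_cast; ring_nf
    rw [Finset.sum_congr rfl fun m _ => e m, h, hcast]
    ring_nf
  simp only [h2] at h1
  have h3 := h1.div_const ((i:ℝ)-1)
  -- the shifted function equals our summand
  have h4 : (fun k : ℕ => (1/((k:ℝ)+1) - 1/((k:ℝ)+i)) / ((i:ℝ)-1))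
      = fun k : ℕ => (if i < k + (i+1) then
          1 / (((↑(k + (i+1)) : ℝ) - i) * ((↑(k + (i+1)) : ℝ) - 1)) else 0) := by
    funext k
    have hcond : i < k + (i+1) := by omega
    rw [if_pos hcond]
    push_cast
    have hk1 : (k:ℝ)+1 ≠ 0 := by positivity
    have hki : (k:ℝ)+i ≠ 0 := by positivity
    have e1 : (k:ℝ)+(i+1)-i = (k:ℝ)+1 := by ring
    have e2 : (k:ℝ)+(i+1)-1 = (k:ℝ)+i := by ring
    have hd : ((k:ℝ)+1)*((k:ℝ)+i)*((i:ℝ)-1) ≠ 0 :=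
      mul_ne_zero (by positivity) hi1'
    rw [e1, e2, div_sub_div _ _ hk1 hki, div_div, div_eq_div_iff hd (by positivity)]
    ring
  rw [h4] at h3
  have h5 := (hasSum_nat_add_iff (f := fun j : ℕ => if i < j then
      1 / (((j : ℝ) - i) * ((j : ℝ) - 1)) else 0) (i+1)).mp h3
  have h6 : ∑ j ∈ Finset.range (i+1), (if i < j then
      1 / (((j : ℝ) - i) * ((j : ℝ) - 1)) else 0) = 0 := by
    apply Finset.sum_eq_zero
    intro j hj
    rw [if_neg]
    exact fun h => absurd (Finset.mem_range.mp hj) (by omega)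
  rw [h6, add_zero] at h5
  -- match the sum value
  have h7 : harmonic' (i-1) = ∑ m ∈ Finset.range (i-1), 1/((m:ℝ)+1) := by
    unfold harmonic'
    rw [← Finset.Ico_add_one_right_eq_Icc, Finset.sum_Ico_eq_sum_range]
    exact Finset.sum_congr (by norm_num) fun m _ => by push_cast; ring
  rw [h7]
  exact h5
end

section
/- For every integer k ≥ 1, the numbers b̂_k(j) := Σ_{m=k+1}^∞ b(m)·p(m,j), for 1 ≤ j ≤ k, form a probability distribution on {1,...,k}; that is, each series converges and Σ_{j=1}^k b̂_k(j) = 1. -/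
open Real Filter Topology MeasureTheory

lemma harmonic'_succ (n : ℕ) : harmonic' (n+1) = harmonic' n + 1/(n+1 : ℝ) := by
  unfold harmonic'
  rw [Finset.sum_Icc_succ_top (by omega)]
  push_cast; ring

lemma harmonic'_nonneg (n : ℕ) : 0 ≤ harmonic' n :=
  Finset.sum_nonneg fun i _ => by positivity

lemma harmonic'_sub_le (N k : ℕ) :
    harmonic' (N + k) - harmonic' N ≤ k / (N + 1 : ℝ) := by
  induction k with
  | zero => simp
  | succ m ih =>
    have h0 : harmonic' (N + (m+1)) = harmonic' (N + m) + 1/((N:ℝ)+m+1) := by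
      rw [show N + (m+1) = (N + m) + 1 by ring, harmonic'_succ]
      push_cast; ring
    rw [h0]
    have h1 : 1/((N:ℝ)+m+1) ≤ 1/((N:ℝ)+1) := by
      apply one_div_le_one_div_of_le (by positivity)
      have : (0:ℝ) ≤ m := Nat.cast_nonneg m
      linarith
    have h2 : ((m:ℝ)+1)/((N:ℝ)+1) = (m:ℝ)/((N:ℝ)+1) + 1/((N:ℝ)+1) := add_div _ _ _
    push_cast
    push_cast at ih
    linarith

lemma harmonic'_mono : Monotone harmonic' := by
  apply monotone_nat_of_le_succ
  intro n
  rw [harmonic'_succ]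
  have : (0:ℝ) ≤ 1/(n+1 : ℝ) := by positivity
  linarith

lemma sum_range_one_div_add (k N : ℕ) :
    ∑ n ∈ Finset.range N, 1/((n:ℝ)+1+k) = harmonic' (N + k) - harmonic' k := by
  induction N with
  | zero => simp
  | succ M ih =>
    rw [Finset.sum_range_succ, ih,
      show M + 1 + k = (M + k) + 1 by ring, harmonic'_succ]
    push_cast; ring

lemma harmonic'_zero : harmonic' 0 = 0 := by simp [harmonic']

lemma sum_range_one_div (N : ℕ) :
    ∑ n ∈ Finset.range N, 1/((n:ℝ)+1) = harmonic' N := by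
  have := sum_range_one_div_add 0 N
  simpa [harmonic'_zero] using this

/-- Telescoping: ∑_{n≥1} 1/(n(n+k)) = h_k/k for k ≥ 1. -/
lemma hasSum_telescope (k : ℕ) (hk : 1 ≤ k) :
    HasSum (fun n : ℕ => 1/((((n:ℝ))+1) * ((n:ℝ)+1+k))) (harmonic' k / k) := by
  have hk' : (0:ℝ) < k := by exact_mod_cast hk
  rw [hasSum_iff_tendsto_nat_of_nonneg (fun i => by positivity)]
  have heq : ∀ N : ℕ, ∑ n ∈ Finset.range N, 1/((((n:ℝ))+1) * ((n:ℝ)+1+k))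
      = harmonic' k / k - (harmonic' (N + k) - harmonic' N) / k := by
    intro N
    have hterm : ∀ n : ℕ, 1/((((n:ℝ))+1) * ((n:ℝ)+1+k))
        = (1/((n:ℝ)+1) - 1/((n:ℝ)+1+k)) / k := by
      intro n
      have h1 : ((n:ℝ)+1) ≠ 0 := by positivity
      have h2 : ((n:ℝ)+1+k) ≠ 0 := by positivity
      field_simp
      ring
    calc ∑ n ∈ Finset.range N, 1/((((n:ℝ))+1) * ((n:ℝ)+1+k))
        = (∑ n ∈ Finset.range N, (1/((n:ℝ)+1) - 1/((n:ℝ)+1+k))) / k := by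
          rw [Finset.sum_div]; exact Finset.sum_congr rfl fun n _ => hterm n
      _ = (harmonic' N - (harmonic' (N + k) - harmonic' k)) / k := by
          rw [Finset.sum_sub_distrib, sum_range_one_div, sum_range_one_div_add]
      _ = harmonic' k / k - (harmonic' (N + k) - harmonic' N) / k := by ring
  simp_rw [heq]
  have htail : Tendsto (fun N : ℕ => (harmonic' (N + k) - harmonic' N) / k) atTop (𝓝 0) := by
    apply squeeze_zero (g := fun N : ℕ => 1/((N:ℝ)+1))
    · intro N
      have := harmonic'_mono (Nat.le_add_right N k)
      exact div_nonneg (by linarith) hk'.le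
    · intro N
      have h1 := harmonic'_sub_le N k
      rw [div_le_iff₀ hk']
      calc harmonic' (N + k) - harmonic' N ≤ (k:ℝ) / ((N:ℝ)+1) := h1
        _ = 1/((N:ℝ)+1) * k := by ring
    · exact tendsto_one_div_add_atTop_nhds_zero_nat
  have := (tendsto_const_nhds (x := harmonic' k / k) (f := atTop (α := ℕ))).sub htail
  simpa using this

lemma hasSum_shifted_basel : HasSum (fun n : ℕ => 1/(((n:ℝ)+1)^2)) (π^2/6) := by
  have h : HasSum (fun n : ℕ => (1:ℝ)/((n+1 : ℕ):ℝ)^2) (π^2/6) := by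
    apply (hasSum_nat_add_iff (f := fun n : ℕ => (1:ℝ)/(n:ℝ)^2) 1).mpr
    simpa using hasSum_zeta_two
  convert h using 2 with n
  push_cast; ring

noncomputable def hdG (k j : ℕ) : ℕ → ℝ :=
  fun m => if k < m then 1/(((m:ℝ)-1)*((m:ℝ)-j)) else 0

lemma hdG_nonneg (k j : ℕ) (hj1 : 1 ≤ j) (hjk : j ≤ k) (m : ℕ) : 0 ≤ hdG k j m := by
  unfold hdG
  split
  · rename_i h
    have h1 : (1:ℝ) ≤ (m:ℝ) - 1 := by
      have : (2:ℕ) ≤ m := by omega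
      have : (2:ℝ) ≤ m := by exact_mod_cast this
      linarith
    have h2 : (1:ℝ) ≤ (m:ℝ) - j := by
      have : (j+1:ℕ) ≤ m := by omega
      have : ((j:ℝ)+1) ≤ m := by exact_mod_cast this
      linarith
    positivity
  · exact le_refl 0

lemma hdG_summable (k j : ℕ) (hj1 : 1 ≤ j) (hjk : j ≤ k) : Summable (hdG k j) := by
  have hmaj : Summable (fun m : ℕ => if k < m then 1/((m:ℝ)-k)^2 else 0) := by
    apply (summable_nat_add_iff (k+1)).mp
    have : (fun n : ℕ => if k < n + (k+1) then 1/(((n + (k+1) : ℕ):ℝ)-k)^2 else 0)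
        = fun n : ℕ => 1/(((n:ℝ))+1)^2 := by
      funext n
      rw [if_pos (by omega)]
      push_cast
      ring_nf
    rw [this]
    exact hasSum_shifted_basel.summable
  apply Summable.of_nonneg_of_le (hdG_nonneg k j hj1 hjk) _ hmaj
  intro m
  unfold hdG
  split
  · rename_i h
    have hm : (k:ℝ) + 1 ≤ (m:ℝ) := by exact_mod_cast h
    have hj : (j:ℝ) ≤ (k:ℝ) := by exact_mod_cast hjk
    have hj1' : (1:ℝ) ≤ (j:ℝ) := by exact_mod_cast hj1
    have h1 : (0:ℝ) < (m:ℝ) - k := by linarith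
    apply one_div_le_one_div_of_le (by positivity)
    have e1 : (m:ℝ) - k ≤ (m:ℝ) - 1 := by linarith
    have e2 : (m:ℝ) - k ≤ (m:ℝ) - j := by linarith
    calc ((m:ℝ)-k)^2 = ((m:ℝ)-k)*((m:ℝ)-k) := sq ((m:ℝ)-k)
      _ ≤ ((m:ℝ)-1)*((m:ℝ)-j) := by
          apply mul_le_mul e1 e2 h1.le (by linarith)
  · simp

lemma sum_reflect (k : ℕ) :
    ∑ j ∈ Finset.Icc 1 k, 1/((k:ℝ)+1-j) = harmonic' k := by
  rw [harmonic']
  apply Finset.sum_nbij' (i := fun j => k+1-j) (j := fun j => k+1-j)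
  · intro a ha; simp only [Finset.mem_Icc] at *; omega
  · intro a ha; simp only [Finset.mem_Icc] at *; omega
  · intro a ha; simp only [Finset.mem_Icc] at ha; omega
  · intro a ha; simp only [Finset.mem_Icc] at ha; omega
  · intro a ha
    simp only [Finset.mem_Icc] at ha
    have : ((k+1-a : ℕ):ℝ) = (k:ℝ)+1-a := by
      have : a ≤ k+1 := by omega
      push_cast [Nat.cast_sub this]
      ring
    rw [this]

noncomputable def hdTot (k : ℕ) : ℕ → ℝ :=
  fun m => if k < m then (6/π^2) * ∑ j ∈ Finset.Icc 1 k, 1/(((m:ℝ)-1)*((m:ℝ)-j)) else 0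

lemma pi_sq_ne : (π:ℝ)^2 ≠ 0 := pow_ne_zero 2 Real.pi_ne_zero

lemma hasSum_hdTot (k : ℕ) (hk : 1 ≤ k) : HasSum (hdTot k) 1 := by
  induction k with
  | zero => omega
  | succ K ih =>
    rcases Nat.eq_zero_or_pos K with hK | hK
    · -- base case k = 1
      subst hK
      have h1 : HasSum (fun n : ℕ => hdTot 1 (n + 2)) 1 := by
        have : (fun n : ℕ => hdTot 1 (n + 2))
            = fun n : ℕ => (6/π^2) * (1/(((n:ℝ))+1)^2) := by
          funext n
          rw [hdTot, if_pos (by omega)]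
          rw [Finset.Icc_self, Finset.sum_singleton]
          push_cast
          ring_nf
        rw [this]
        have := hasSum_shifted_basel.mul_left (6/π^2)
        convert this using 1
        rfl
        rw [div_mul_div_comm, mul_comm (6:ℝ) (π^2), div_self (mul_ne_zero pi_sq_ne (by norm_num))]
      have h2 := (hasSum_nat_add_iff (f := hdTot 1) 2).mp h1
      have h3 : ∑ i ∈ Finset.range 2, hdTot 1 i = 0 := by
        rw [Finset.sum_range_succ, Finset.sum_range_one]
        rw [hdTot, hdTot, if_neg (by omega), if_neg (by omega)]
        ring
      rw [h3, add_zero] at h2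
      exact h2
    · -- inductive step
      have ihK := ih hK
      have hKr : (0:ℝ) < K := by exact_mod_cast hK
      set s : ℝ := (6/π^2) * (harmonic' K / K) with hs
      -- the extra column
      have hE : HasSum (fun m : ℕ => if K+1 < m then
          (6/π^2) * (1/(((m:ℝ)-1)*((m:ℝ)-(K+1)))) else 0) s := by
        set E := fun m : ℕ => if K+1 < m then
          (6/π^2) * (1/(((m:ℝ)-1)*((m:ℝ)-(K+1)))) else 0 with hEdef
        have h1 : HasSum (fun n : ℕ => E (n + (K+2))) s := by
          have : (fun n : ℕ => E (n + (K+2)))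
              = fun n : ℕ => (6/π^2) * (1/((((n:ℝ))+1) * ((n:ℝ)+1+K))) := by
            funext n
            rw [hEdef]
            simp only
            rw [if_pos (by omega)]
            push_cast
            ring_nf
          rw [this, hs]
          exact (hasSum_telescope K hK).mul_left (6/π^2)
        have h2 := (hasSum_nat_add_iff (f := E) (K+2)).mp h1
        have h3 : ∑ i ∈ Finset.range (K+2), E i = 0 := by
          apply Finset.sum_eq_zero
          intro i hi
          simp only [Finset.mem_range] at hi
          rw [hEdef]
          simp only
          rw [if_neg (by omega)]
        rwa [h3, add_zero] at h2
      -- point mass at K+1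
      have hD : HasSum (fun m : ℕ => if m = K+1 then s else 0) s :=
        hasSum_ite_eq (K+1) s
      -- value of hdTot K at K+1
      have hTotval : hdTot K (K+1) = s := by
        rw [hdTot, if_pos (by omega), hs]
        congr 1
        have hterm : ∀ j ∈ Finset.Icc 1 K,
            1/((((K+1:ℕ):ℝ)-1)*(((K+1:ℕ):ℝ)-(j:ℝ))) = 1/((K:ℝ)) * (1/((K:ℝ)+1-j)) := by
          intro j hj
          simp only [Finset.mem_Icc] at hj
          have hj' : (j:ℝ) ≤ K := by exact_mod_cast hj.2
          have hj1 : (1:ℝ) ≤ (j:ℝ) := by exact_mod_cast hj.1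
          have hne : (K:ℝ)+1-j ≠ 0 := by linarith
          push_cast
          field_simp
          rw [add_sub_cancel_right, div_self hKr.ne']
        calc ∑ j ∈ Finset.Icc 1 K, 1/((((K+1:ℕ):ℝ)-1)*(((K+1:ℕ):ℝ)-(j:ℝ)))
            = ∑ j ∈ Finset.Icc 1 K, 1/((K:ℝ)) * (1/((K:ℝ)+1-j)) :=
              Finset.sum_congr rfl hterm
          _ = 1/(K:ℝ) * ∑ j ∈ Finset.Icc 1 K, (1/((K:ℝ)+1-j)) := by
              rw [Finset.mul_sum]
          _ = harmonic' K / K := by rw [sum_reflect]; ring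
      -- combine
      have hcomb : hdTot (K+1) = fun m =>
          hdTot K m + (if K+1 < m then (6/π^2) * (1/(((m:ℝ)-1)*((m:ℝ)-(K+1)))) else 0)
            - (if m = K+1 then s else 0) := by
        funext m
        by_cases h1 : m = K+1
        · subst h1
          rw [hdTot, if_neg (by omega), hTotval, if_neg (by omega), if_pos rfl]
          ring
        · by_cases h2 : K+1 < m
          · rw [hdTot, if_pos (by omega), hdTot, if_pos (by omega),
              if_pos h2, if_neg h1]
            rw [Finset.sum_Icc_succ_top (by omega : 1 ≤ K+1), mul_add]
            push_cast
            ring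
          · rw [hdTot, if_neg h2, hdTot, if_neg (by omega), if_neg h2, if_neg h1]
            ring
      have hfin := (ihK.add hE).sub hD
      rw [← hcomb] at hfin
      simpa using hfin


theorem hd_overshoot_probability (k : ℕ) (hk : 1 ≤ k) :
    ∃ bhat : ℕ → ℝ,
      (∀ j : ℕ, 1 ≤ j → j ≤ k →
        HasSum (fun m : ℕ => if k < m then hdB m * hdP m j else 0) (bhat j)) ∧
      (∀ j : ℕ, 1 ≤ j → j ≤ k → 0 ≤ bhat j) ∧
      ∑ j ∈ Finset.Icc 1 k, bhat j = 1 := by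
  have hfun : ∀ j : ℕ, 1 ≤ j → j ≤ k →
      (fun m : ℕ => if k < m then hdB m * hdP m j else 0)
        = fun m => (6/π^2) * hdG k j m := by
    intro j hj1 hjk
    funext m
    rw [hdG]
    by_cases h : k < m
    · rw [if_pos h, if_pos h, hdB, if_neg (by omega), hdP]
      have hm1 : (1:ℕ) ≤ m := by omega
      have hh : 0 < harmonic' (m-1) := harmonic'_pos (by omega)
      have hcast : ((m-1:ℕ):ℝ) = (m:ℝ)-1 := by push_cast [Nat.cast_sub hm1]; ring
      have hm2 : (2:ℝ) ≤ (m:ℝ) := by exact_mod_cast (by omega : 2 ≤ m)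
      have hjm : (j:ℝ)+1 ≤ (m:ℝ) := by exact_mod_cast (by omega : j+1 ≤ m)
      have hne1 : (m:ℝ)-1 ≠ 0 := by linarith
      have hne2 : (m:ℝ)-(j:ℝ) ≠ 0 := by linarith
      have hne3 : harmonic' (m-1) ≠ 0 := ne_of_gt hh
      field_simp
    · simp [h]
  refine ⟨fun j => ∑' m, (6/π^2) * hdG k j m, ?_, ?_, ?_⟩
  · intro j hj1 hjk
    rw [hfun j hj1 hjk]
    exact ((hdG_summable k j hj1 hjk).mul_left _).hasSum
  · intro j hj1 hjk
    apply tsum_nonneg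
    intro m
    have h1 := hdG_nonneg k j hj1 hjk m
    have h2 : (0:ℝ) ≤ 6/π^2 := by positivity
    exact mul_nonneg h2 h1
  · have hsum : HasSum (fun m => ∑ j ∈ Finset.Icc 1 k, (6/π^2) * hdG k j m)
        (∑ j ∈ Finset.Icc 1 k, ∑' m, (6/π^2) * hdG k j m) := by
      apply hasSum_sum
      intro j hj
      simp only [Finset.mem_Icc] at hj
      exact ((hdG_summable k j hj.1 hj.2).mul_left _).hasSum
    have heq : (fun m => ∑ j ∈ Finset.Icc 1 k, (6/π^2) * hdG k j m) = hdTot k := by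
      funext m
      rw [hdTot]
      by_cases h : k < m
      · rw [if_pos h, Finset.mul_sum]
        exact Finset.sum_congr rfl fun j hj => by rw [hdG, if_pos h]
      · rw [if_neg h]
        exact Finset.sum_eq_zero fun j hj => by rw [hdG, if_neg h, mul_zero]
    rw [heq] at hsum
    exact hsum.unique (hasSum_hdTot k hk)
end

section
/- Let c : {1,2,3,...} → [0,∞) be any sequence such that for every i ≥ 1 the series Σ_{j=i+1}^∞ c(j)·p(j,i) converges and equals c(i). Then for all integers 1 ≤ i ≤ k, c(i) = Σ_{m=k+1}^∞ Σ_{j=i}^k c(m)·p(m,j)·a(j,i), where the double series converges. -/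
open Real Filter Topology MeasureTheory

/-- First-step decomposition for the occupation probabilities. -/
lemma hd_first_step
    (a : ℕ → ℕ → ℝ)
    (ha_diag : ∀ n : ℕ, 1 ≤ n → a n n = 1)
    (ha_rec : ∀ n i : ℕ, 1 ≤ i → i < n →
      a n i = ∑ j ∈ Finset.Ioc i n, a n j * hdP j i) :
    ∀ d n i : ℕ, n - i = d → 1 ≤ i → i < n →
      a n i = ∑ j ∈ Finset.Ico i n, hdP n j * a j i := by
  intro d
  induction d using Nat.strong_induction_on with
  | _ d IH =>
    intro n i hd h1 h2
    obtain ⟨m, rfl⟩ : ∃ m, n = m + 1 := ⟨n - 1, by omega⟩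
    have him : i ≤ m := by omega
    have hsplit : a (m + 1) i
        = (∑ j ∈ Finset.Ioc i m, a (m + 1) j * hdP j i) + a (m+1) (m+1) * hdP (m+1) i := by
      rw [ha_rec (m+1) i h1 h2, Finset.sum_Ioc_succ_top him]
    have hinner : ∀ j ∈ Finset.Ioc i m,
        a (m + 1) j * hdP j i
          = ∑ l ∈ Finset.Icc j m, hdP (m+1) l * a l j * hdP j i := by
      intro j hj
      simp only [Finset.mem_Ioc] at hj
      have := IH ((m+1) - j) (by omega) (m+1) j rfl (by omega) (by omega)
      rw [Finset.Ico_add_one_right_eq_Icc] at this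
      rw [this, ← Finset.sum_mul]
    rw [hsplit, Finset.sum_congr rfl hinner]
    have hswap : (∑ j ∈ Finset.Ioc i m, ∑ l ∈ Finset.Icc j m,
          hdP (m+1) l * a l j * hdP j i)
        = ∑ l ∈ Finset.Ioc i m, ∑ j ∈ Finset.Ioc i l,
          hdP (m+1) l * a l j * hdP j i := by
      apply Finset.sum_comm'
      intro j l
      simp only [Finset.mem_Ioc, Finset.mem_Icc]
      omega
    rw [hswap]
    have hinner2 : ∀ l ∈ Finset.Ioc i m,
        (∑ j ∈ Finset.Ioc i l, hdP (m+1) l * a l j * hdP j i)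
          = hdP (m+1) l * a l i := by
      intro l hl
      simp only [Finset.mem_Ioc] at hl
      rw [ha_rec l i h1 hl.1, Finset.mul_sum]
      exact Finset.sum_congr rfl fun j _ => by ring
    rw [Finset.sum_congr rfl hinner2, ha_diag (m+1) (by omega)]
    rw [show Finset.Ico i (m+1) = Finset.Icc i m from Finset.Ico_add_one_right_eq_Icc i m,
      Finset.Icc_eq_cons_Ioc him, Finset.sum_cons, ha_diag i h1]
    ring

theorem hd_decompose_at_jump
    (a : ℕ → ℕ → ℝ)
    (ha_diag : ∀ n : ℕ, 1 ≤ n → a n n = 1)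
    (ha_rec : ∀ n i : ℕ, 1 ≤ i → i < n →
      a n i = ∑ j ∈ Finset.Ioc i n, a n j * hdP j i)
    (c : ℕ → ℝ)
    (hc_nonneg : ∀ i : ℕ, 1 ≤ i → 0 ≤ c i)
    (hc : ∀ i : ℕ, 1 ≤ i →
      HasSum (fun j : ℕ => if i < j then c j * hdP j i else 0) (c i))
    (i k : ℕ) (hi : 1 ≤ i) (hik : i ≤ k) :
    HasSum
      (fun m : ℕ =>
        if k < m then ∑ j ∈ Finset.Icc i k, c m * hdP m j * a j i else 0)
      (c i) := by
  induction k, hik using Nat.le_induction with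
  | base =>
    have h := hc i hi
    have hfun : (fun j : ℕ => if i < j then c j * hdP j i else 0)
        = (fun m : ℕ =>
            if i < m then ∑ j ∈ Finset.Icc i i, c m * hdP m j * a j i else 0) := by
      funext m
      simp [Finset.Icc_self, ha_diag i hi]
    exact hfun ▸ h
  | succ k hik IH =>
    set S : ℕ → ℝ := fun m => ∑ j ∈ Finset.Icc i k, c m * hdP m j * a j i with hS
    have h2 : HasSum (fun m : ℕ => if m = k + 1 then S (k+1) else 0) (S (k+1)) :=
      hasSum_ite_eq (k+1) (S (k+1))
    have h3 : HasSum (fun m : ℕ => (if k + 1 < m then c m * hdP m (k+1) else 0) * a (k+1) i)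
        (c (k+1) * a (k+1) i) := (hc (k+1) (by omega)).mul_right _
    have key : S (k+1) = c (k+1) * a (k+1) i := by
      have hfs := hd_first_step a ha_diag ha_rec ((k+1) - i) (k+1) i rfl hi (by omega)
      rw [hS]
      simp only
      rw [show Finset.Icc i k = Finset.Ico i (k+1) from (Finset.Ico_add_one_right_eq_Icc i k).symm,
        hfs, Finset.mul_sum]
      exact Finset.sum_congr rfl fun j _ => by ring
    rw [← key] at h3
    have hfin := (IH.sub h2).add h3
    rw [show c i - S (k+1) + S (k+1) = c i from by ring] at hfin
    have hfun : (fun m : ℕ =>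
          ((if k < m then S m else 0) - (if m = k + 1 then S (k+1) else 0))
            + (if k + 1 < m then c m * hdP m (k+1) else 0) * a (k+1) i)
        = (fun m : ℕ =>
            if k + 1 < m then ∑ j ∈ Finset.Icc i (k+1), c m * hdP m j * a j i else 0) := by
      funext m
      rcases lt_trichotomy m (k+1) with hm | hm | hm
      · rw [if_neg (by omega), if_neg (by omega), if_neg (by omega), if_neg (by omega)]
        ring
      · subst hm
        rw [if_pos (by omega), if_pos rfl, if_neg (by omega), if_neg (by omega)]
        ring
      · rw [if_pos (by omega), if_neg (by omega), if_pos hm, if_pos hm,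
          Finset.sum_Icc_succ_top (by omega : i ≤ k + 1)]
        ring
    exact hfun ▸ hfin
end

section
/- There exists an absolute constant K < ∞ such that for all integers 1 ≤ x < y, the expected logarithmic overshoot of the HD chain started at y over level x satisfies Σ_{j=1}^x q_x(y,j)·(log x − log j) ≤ K. -/
open Real Filter Topology MeasureTheory

lemma hdP_pos {i y : ℕ} (h1 : 1 ≤ i) (h2 : i < y) : 0 < hdP y i := by
  unfold hdP
  have h3 : (i : ℝ) < (y : ℝ) := by exact_mod_cast h2
  have hH : 0 < harmonic' (y - 1) := harmonic'_pos (by omega)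
  have : 0 < ((y : ℝ) - i) * harmonic' (y - 1) := mul_pos (by linarith) hH
  positivity

lemma sum_inv_shift {y : ℕ} (hy : 2 ≤ y) :
    ∑ i ∈ Finset.Icc 1 (y - 1), 1 / ((y : ℝ) - i) = harmonic' (y - 1) := by
  unfold harmonic'
  refine Finset.sum_nbij' (fun i => y - i) (fun i => y - i) ?_ ?_ ?_ ?_ ?_
  · intro a ha; simp only [Finset.mem_Icc] at ha ⊢; omega
  · intro a ha; simp only [Finset.mem_Icc] at ha ⊢; omega
  · intro a ha; simp only [Finset.mem_Icc] at ha ⊢; omega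
  · intro a ha; simp only [Finset.mem_Icc] at ha ⊢; omega
  · intro a ha
    rw [Finset.mem_Icc] at ha
    have : ((y - a : ℕ) : ℝ) = (y : ℝ) - a := by
      push_cast [Nat.cast_sub (by omega : a ≤ y)]; ring
    rw [this]

lemma sum_log_le (x : ℕ) :
    ∑ j ∈ Finset.Icc 1 x, (Real.log x - Real.log j) ≤ x := by
  induction x with
  | zero => simp
  | succ n ih =>
    rcases Nat.eq_zero_or_pos n with h0 | hn
    · subst h0; norm_num
    · rw [Finset.sum_Icc_succ_top (by omega : 1 ≤ n + 1)]
      have hlog : Real.log (n + 1) - Real.log n ≤ 1 / n := by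
        have h1 : (0:ℝ) < n := by exact_mod_cast hn
        have h2 : (0:ℝ) < ((n:ℝ)+1)/n := by positivity
        have := Real.log_le_sub_one_of_pos h2
        rw [Real.log_div (by positivity) (by positivity)] at this
        have : Real.log ((n:ℝ)+1) - Real.log n ≤ ((n:ℝ)+1)/n - 1 := this
        have heq : ((n:ℝ)+1)/n - 1 = 1/n := by field_simp; ring
        push_cast
        linarith [heq ▸ this]
      have hsplit : ∀ j ∈ Finset.Icc 1 n,
          Real.log ((n:ℕ)+1 : ℕ) - Real.log j
            = (Real.log n - Real.log j) + (Real.log ((n:ℝ)+1) - Real.log n) := by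
        intro j hj; push_cast; ring
      rw [Finset.sum_congr rfl hsplit, Finset.sum_add_distrib, Finset.sum_const,
        Nat.card_Icc]
      simp only [Nat.add_sub_cancel, nsmul_eq_mul]
      have hb : (n:ℝ) * (Real.log ((n:ℝ)+1) - Real.log n) ≤ 1 := by
        have h1 : (0:ℝ) < n := by exact_mod_cast hn
        calc (n:ℝ) * (Real.log ((n:ℝ)+1) - Real.log n) ≤ (n:ℝ) * (1/n) :=
              mul_le_mul_of_nonneg_left hlog (le_of_lt h1)
          _ = 1 := by field_simp
      have hz : Real.log ((n:ℕ)+1 : ℕ) - Real.log ((n:ℕ)+1 : ℕ) = 0 := by ring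
      push_cast
      push_cast at ih
      nlinarith [ih]

lemma key_term_B {x y j : ℕ} (hj1 : 1 ≤ j) (hjx : j ≤ x) (hxy : x < y) :
    (Real.log x - Real.log j) / ((y:ℝ) - j)
      ≤ (2 / x) * (Real.log x - Real.log j) + 2 / x := by
  have hJ1 : (1:ℝ) ≤ (j:ℝ) := by exact_mod_cast hj1
  have hJX : (j:ℝ) ≤ (x:ℝ) := by exact_mod_cast hjx
  have hXY : (x:ℝ) + 1 ≤ (y:ℝ) := by exact_mod_cast hxy
  have hXpos : (0:ℝ) < x := by linarith
  have ha : 0 ≤ Real.log x - Real.log j := by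
    have := Real.log_le_log (by linarith : (0:ℝ) < j) hJX
    linarith
  have hx2 : (0:ℝ) ≤ 2 / x := by positivity
  by_cases h2j : 2 * j ≤ x
  · have hJ2 : (j:ℝ) ≤ (x:ℝ) / 2 := by
      have : (2*j : ℝ) ≤ (x:ℝ) := by exact_mod_cast h2j
      linarith
    have hden : (x:ℝ) / 2 ≤ (y:ℝ) - j := by linarith
    have hden0 : (0:ℝ) < (x:ℝ) / 2 := by positivity
    have h1 : (Real.log x - Real.log j) / ((y:ℝ) - j)
        ≤ (Real.log x - Real.log j) / ((x:ℝ)/2) :=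
      div_le_div_of_nonneg_left ha hden0 hden
    have h2 : (Real.log x - Real.log j) / ((x:ℝ)/2)
        = (2 / x) * (Real.log x - Real.log j) := by
      field_simp
    nlinarith
  · have hJhalf : (x:ℝ) < 2 * j := by exact_mod_cast Nat.lt_of_not_le h2j
    have hJ0 : (0:ℝ) < (j:ℝ) := by linarith
    have hYJ : (0:ℝ) < (y:ℝ) - j := by linarith
    have hlog : Real.log x - Real.log j ≤ ((x:ℝ) - j) / j := by
      have h0 : (0:ℝ) < (x:ℝ)/j := by positivity
      have := Real.log_le_sub_one_of_pos h0
      rw [Real.log_div (by positivity) (by positivity)] at this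
      have : Real.log x - Real.log j ≤ (x:ℝ)/j - 1 := this
      have heq : (x:ℝ)/j - 1 = ((x:ℝ) - j)/j := by field_simp
      linarith [heq ▸ this]
    have h1 : (Real.log x - Real.log j) / ((y:ℝ) - j)
        ≤ (((x:ℝ) - j) / j) / ((y:ℝ) - j) := by gcongr
    have h2 : (((x:ℝ) - j) / j) / ((y:ℝ) - j) ≤ 2 / x := by
      rw [div_div, div_le_div_iff₀ (by positivity) hXpos]
      nlinarith
    nlinarith [mul_nonneg hx2 ha]

lemma key_ineq {x y : ℕ} (hx : 1 ≤ x) (hxy : x < y) :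
    ∑ j ∈ Finset.Icc 1 x, (Real.log x - Real.log j) / ((y:ℝ) - j)
      ≤ 8 * ∑ j ∈ Finset.Icc 1 x, 1 / ((y:ℝ) - j) := by
  have hXpos : (0:ℝ) < x := by exact_mod_cast hx
  have hYpos : (0:ℝ) < y := by
    have : (0:ℕ) < y := by omega
    exact_mod_cast this
  have hmem : ∀ j ∈ Finset.Icc 1 x, 1 ≤ j ∧ j ≤ x := by
    intro j hj; exact Finset.mem_Icc.mp hj
  have hanonneg : ∀ j ∈ Finset.Icc 1 x, 0 ≤ Real.log x - Real.log j := by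
    intro j hj
    obtain ⟨h1, h2⟩ := hmem j hj
    have hJ0 : (0:ℝ) < j := by exact_mod_cast h1
    have := Real.log_le_log hJ0 (by exact_mod_cast h2 : (j:ℝ) ≤ x)
    linarith
  have hyj : ∀ j ∈ Finset.Icc 1 x, (0:ℝ) < (y:ℝ) - j := by
    intro j hj
    obtain ⟨h1, h2⟩ := hmem j hj
    have : (j:ℝ) ≤ x := by exact_mod_cast h2
    have : (x:ℝ) + 1 ≤ y := by exact_mod_cast hxy
    linarith
  by_cases hcase : 2 * x ≤ y
  · -- far case
    have h2x : 2 * (x:ℝ) ≤ y := by exact_mod_cast hcase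
    have hL : ∑ j ∈ Finset.Icc 1 x, (Real.log x - Real.log j) / ((y:ℝ) - j)
        ≤ ∑ j ∈ Finset.Icc 1 x, (2 / y) * (Real.log x - Real.log j) := by
      apply Finset.sum_le_sum
      intro j hj
      obtain ⟨h1, h2⟩ := hmem j hj
      have hJX : (j:ℝ) ≤ x := by exact_mod_cast h2
      have hden : (y:ℝ) / 2 ≤ (y:ℝ) - j := by linarith
      have := div_le_div_of_nonneg_left (hanonneg j hj) (by positivity : (0:ℝ) < (y:ℝ)/2) hden
      have heq : (Real.log x - Real.log j) / ((y:ℝ)/2) = 2 / y * (Real.log x - Real.log j) := by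
        field_simp
      linarith [heq ▸ this]
    have hL2 : ∑ j ∈ Finset.Icc 1 x, (2 / y) * (Real.log x - Real.log j) ≤ 2 / y * x := by
      rw [← Finset.mul_sum]
      have := sum_log_le x
      have h2y : (0:ℝ) ≤ 2 / y := by positivity
      exact mul_le_mul_of_nonneg_left this h2y
    have hR : (x:ℝ) * (1 / y) ≤ ∑ j ∈ Finset.Icc 1 x, 1 / ((y:ℝ) - j) := by
      have : ∑ j ∈ Finset.Icc 1 x, (1:ℝ) / y ≤ ∑ j ∈ Finset.Icc 1 x, 1 / ((y:ℝ) - j) := by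
        apply Finset.sum_le_sum
        intro j hj
        obtain ⟨h1, h2⟩ := hmem j hj
        have hJ0 : (0:ℝ) < j := by exact_mod_cast h1
        exact one_div_le_one_div_of_le (hyj j hj) (by linarith)
      simpa [Finset.sum_const, Nat.card_Icc, nsmul_eq_mul] using this
    have heq : 2 / (y:ℝ) * x = 2 * ((x:ℝ) * (1/y)) := by field_simp; all_goals ring
    have hxy0 : (0:ℝ) ≤ (x:ℝ) * (1/y) := by positivity
    linarith
  · -- near case : y < 2x
    have h2x : (y:ℝ) < 2 * x := by exact_mod_cast Nat.lt_of_not_le hcase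
    have hL : ∑ j ∈ Finset.Icc 1 x, (Real.log x - Real.log j) / ((y:ℝ) - j)
        ≤ ∑ j ∈ Finset.Icc 1 x, ((2 / x) * (Real.log x - Real.log j) + 2 / x) := by
      apply Finset.sum_le_sum
      intro j hj
      obtain ⟨h1, h2⟩ := hmem j hj
      exact key_term_B h1 h2 hxy
    have hL2 : ∑ j ∈ Finset.Icc 1 x, ((2 / x) * (Real.log x - Real.log j) + 2 / x) ≤ 4 := by
      rw [Finset.sum_add_distrib, ← Finset.mul_sum, Finset.sum_const, Nat.card_Icc]
      simp only [Nat.add_sub_cancel, nsmul_eq_mul]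
      have h2y : (0:ℝ) ≤ 2 / x := by positivity
      have h1 : 2 / (x:ℝ) * ∑ j ∈ Finset.Icc 1 x, (Real.log x - Real.log j) ≤ 2 / x * x :=
        mul_le_mul_of_nonneg_left (sum_log_le x) h2y
      have h2 : 2 / (x:ℝ) * x = 2 := by field_simp
      have h3 : (x:ℝ) * (2 / x) = 2 := by field_simp
      linarith
    have hR : (1:ℝ) / 2 ≤ ∑ j ∈ Finset.Icc 1 x, 1 / ((y:ℝ) - j) := by
      have hterm : ∑ j ∈ Finset.Icc 1 x, (1:ℝ) / (2 * x) ≤ ∑ j ∈ Finset.Icc 1 x, 1 / ((y:ℝ) - j) := by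
        apply Finset.sum_le_sum
        intro j hj
        obtain ⟨h1, h2⟩ := hmem j hj
        have hJ0 : (0:ℝ) < j := by exact_mod_cast h1
        exact one_div_le_one_div_of_le (hyj j hj) (by linarith)
      have : ∑ j ∈ Finset.Icc 1 x, (1:ℝ) / (2 * x) = (1:ℝ)/2 := by
        rw [Finset.sum_const, Nat.card_Icc]
        simp only [Nat.add_sub_cancel, nsmul_eq_mul]
        field_simp
        all_goals ring
      linarith [this ▸ hterm]
    have hRnn : (0:ℝ) ≤ ∑ j ∈ Finset.Icc 1 x, 1 / ((y:ℝ) - j) := by linarith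
    linarith

lemma sum_hdP_eq_one {y : ℕ} (hy : 2 ≤ y) :
    ∑ i ∈ Finset.Icc 1 (y - 1), hdP y i = 1 := by
  have hH : 0 < harmonic' (y - 1) := harmonic'_pos (by omega)
  have h1 : ∑ i ∈ Finset.Icc 1 (y - 1), hdP y i
      = (∑ i ∈ Finset.Icc 1 (y - 1), 1 / ((y:ℝ) - i)) * (1 / harmonic' (y - 1)) := by
    rw [Finset.sum_mul]
    apply Finset.sum_congr rfl
    intro i hi
    unfold hdP
    rw [one_div, mul_inv]
    ring
  rw [h1, sum_inv_shift hy]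
  field_simp

theorem hd_log_overshoot_bounded
    (q : ℕ → ℕ → ℕ → ℝ)
    (hq : ∀ x y j : ℕ, 1 ≤ j → j ≤ x → x < y →
      q x y j = hdP y j + ∑ z ∈ Finset.Ioc x (y - 1), hdP y z * q x z j) :
    ∃ K : ℝ, ∀ x y : ℕ, 1 ≤ x → x < y →
      ∑ j ∈ Finset.Icc 1 x, q x y j * (Real.log x - Real.log j) ≤ K := by
  refine ⟨8, ?_⟩
  intro x y
  induction y using Nat.strong_induction_on with
  | _ y IH =>
  intro hx hxy
  have hy2 : 2 ≤ y := by omega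
  have hH : 0 < harmonic' (y - 1) := harmonic'_pos (by omega)
  have hrw : ∑ j ∈ Finset.Icc 1 x, q x y j * (Real.log x - Real.log j)
      = (∑ j ∈ Finset.Icc 1 x, hdP y j * (Real.log x - Real.log j))
        + ∑ z ∈ Finset.Ioc x (y - 1), hdP y z *
            (∑ j ∈ Finset.Icc 1 x, q x z j * (Real.log x - Real.log j)) := by
    have h1 : ∀ j ∈ Finset.Icc 1 x, q x y j * (Real.log x - Real.log j)
        = hdP y j * (Real.log x - Real.log j)
          + ∑ z ∈ Finset.Ioc x (y - 1), hdP y z * q x z j * (Real.log x - Real.log j) := by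
      intro j hj
      obtain ⟨hj1, hj2⟩ := Finset.mem_Icc.mp hj
      rw [hq x y j hj1 hj2 hxy, add_mul, Finset.sum_mul]
    rw [Finset.sum_congr rfl h1, Finset.sum_add_distrib]
    congr 1
    rw [Finset.sum_comm]
    apply Finset.sum_congr rfl
    intro z _
    rw [Finset.mul_sum]
    apply Finset.sum_congr rfl
    intro j _
    ring
  rw [hrw]
  have hunion : Finset.Icc 1 x ∪ Finset.Ioc x (y - 1) = Finset.Icc 1 (y - 1) := by
    ext a
    simp only [Finset.mem_union, Finset.mem_Icc, Finset.mem_Ioc]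
    omega
  have hdisj : Disjoint (Finset.Icc 1 x) (Finset.Ioc x (y - 1)) := by
    simp only [Finset.disjoint_left, Finset.mem_Icc, Finset.mem_Ioc]
    omega
  have hsplit : (∑ j ∈ Finset.Icc 1 x, hdP y j) + ∑ z ∈ Finset.Ioc x (y - 1), hdP y z = 1 := by
    rw [← Finset.sum_union hdisj, hunion, sum_hdP_eq_one hy2]
  set m := ∑ j ∈ Finset.Icc 1 x, hdP y j with hm
  have hsecond : ∑ z ∈ Finset.Ioc x (y - 1), hdP y z *
        (∑ j ∈ Finset.Icc 1 x, q x z j * (Real.log x - Real.log j))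
      ≤ ∑ z ∈ Finset.Ioc x (y - 1), hdP y z * 8 := by
    apply Finset.sum_le_sum
    intro z hz
    obtain ⟨hz1, hz2⟩ := Finset.mem_Ioc.mp hz
    have hzy : z < y := by omega
    exact mul_le_mul_of_nonneg_left (IH z hzy hx hz1) (hdP_pos (by omega) hzy).le
  have hsum8 : ∑ z ∈ Finset.Ioc x (y - 1), hdP y z * 8 = (1 - m) * 8 := by
    rw [← Finset.sum_mul]
    have : ∑ z ∈ Finset.Ioc x (y - 1), hdP y z = 1 - m := by linarith [hsplit]
    rw [this]
  have hfirst : ∑ j ∈ Finset.Icc 1 x, hdP y j * (Real.log x - Real.log j) ≤ 8 * m := by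
    have e1 : ∑ j ∈ Finset.Icc 1 x, hdP y j * (Real.log x - Real.log j)
        = (∑ j ∈ Finset.Icc 1 x, (Real.log x - Real.log j) / ((y:ℝ) - j))
            * (1 / harmonic' (y - 1)) := by
      rw [Finset.sum_mul]
      apply Finset.sum_congr rfl
      intro j _
      unfold hdP
      rw [one_div, mul_inv]
      field_simp
      all_goals ring
    have e2 : m = (∑ j ∈ Finset.Icc 1 x, 1 / ((y:ℝ) - j)) * (1 / harmonic' (y - 1)) := by
      rw [hm, Finset.sum_mul]
      apply Finset.sum_congr rfl
      intro j _
      unfold hdP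
      rw [one_div, mul_inv]
      ring
    rw [e1, e2, ← mul_assoc]
    apply mul_le_mul_of_nonneg_right (key_ineq hx hxy)
    positivity
  linarith
end

section
/- There exist constants C₁, C₂ > 0 such that for every integer y ≥ 2 and every real a with −log(1 − 1/y) ≤ a ≤ log y, C₁·(−log(1 − e^{−a}))/log y ≤ Σ_{i=1}^{⌊e^{−a}·y⌋} p(y,i) ≤ C₂·(−log(1 − e^{−a}))/log y. -/
open Real Filter Topology MeasureTheory

lemma harmonic'_one : harmonic' 1 = 1 := by simp [harmonic']

lemma h_diff_le_log (n : ℕ) (hn : 1 ≤ n) : ∀ N, n ≤ N →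
    harmonic' N - harmonic' n ≤ Real.log N - Real.log n := by
  intro N hN
  induction N, hN using Nat.le_induction with
  | base => simp
  | succ N hN ih =>
    have hN1 : (1:ℝ) ≤ N := by exact_mod_cast hN.trans' hn
    have key : 1/((N:ℝ)+1) ≤ Real.log (N+1) - Real.log N := by
      have h1 : Real.log ((N:ℝ)/(N+1)) ≤ (N:ℝ)/(N+1) - 1 :=
        Real.log_le_sub_one_of_pos (by positivity)
      rw [Real.log_div (by linarith) (by positivity)] at h1
      have h2 : (N:ℝ)/(N+1) - 1 = -(1/((N:ℝ)+1)) := by field_simp; ring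
      linarith [h2 ▸ h1]
    have hs := harmonic'_succ N
    push_cast at hs ⊢
    linarith

lemma log_le_h_diff (n : ℕ) : ∀ N, n ≤ N →
    Real.log ((N:ℝ)+1) - Real.log ((n:ℝ)+1) ≤ harmonic' N - harmonic' n := by
  intro N hN
  induction N, hN using Nat.le_induction with
  | base => simp
  | succ N hN ih =>
    have key : Real.log ((N:ℝ)+2) - Real.log ((N:ℝ)+1) ≤ 1/((N:ℝ)+1) := by
      have h1 : Real.log (((N:ℝ)+2)/(N+1)) ≤ ((N:ℝ)+2)/(N+1) - 1 :=
        Real.log_le_sub_one_of_pos (by positivity)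
      rw [Real.log_div (by positivity) (by positivity)] at h1
      have h2 : ((N:ℝ)+2)/(N+1) - 1 = 1/((N:ℝ)+1) := by
        field_simp
        norm_num
      linarith [h2 ▸ h1]
    have hs := harmonic'_succ N
    push_cast
    have e : ((N:ℝ) + 1 + 1) = (N:ℝ) + 2 := by ring
    rw [e, hs]
    linarith

lemma h_diff_ge_card (n : ℕ) : ∀ N, n ≤ N →
    ((N:ℝ) - n)/N ≤ harmonic' N - harmonic' n := by
  intro N hN
  induction N, hN using Nat.le_induction with
  | base => simp
  | succ N hN ih =>
    have hn0 : (0:ℝ) ≤ n := by positivity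
    have hNn : (n:ℝ) ≤ N := by exact_mod_cast hN
    have hs := harmonic'_succ N
    push_cast
    rw [hs]
    have key : ((N:ℝ)+1 - n)/(N+1) ≤ ((N:ℝ) - n)/(N+1) + 1/((N:ℝ)+1) := by
      rw [← add_div]
      apply le_of_eq
      ring
    have key2 : ((N:ℝ) - n)/(N+1) ≤ ((N:ℝ) - n)/N ∨ N = 0 := by
      rcases Nat.eq_zero_or_pos N with h|h
      · right; exact h
      · left
        apply div_le_div_of_nonneg_left (by linarith) (by exact_mod_cast h) (by linarith)
    rcases key2 with h|h
    · linarith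
    · subst h
      interval_cases n
      simp_all

lemma h_diff_le_card (n : ℕ) : ∀ N, n ≤ N →
    harmonic' N - harmonic' n ≤ ((N:ℝ) - n)/((n:ℝ)+1) := by
  intro N hN
  induction N, hN using Nat.le_induction with
  | base => simp
  | succ N hN ih =>
    have hNn : (n:ℝ) ≤ N := by exact_mod_cast hN
    have hs := harmonic'_succ N
    push_cast
    rw [hs]
    have key : 1/((N:ℝ)+1) ≤ 1/((n:ℝ)+1) :=
      div_le_div_of_nonneg_left (by norm_num) (by positivity) (by linarith)
    have e : ((N:ℝ)+1 - n)/((n:ℝ)+1) = ((N:ℝ) - n)/((n:ℝ)+1) + 1/((n:ℝ)+1) := by ring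
    linarith

lemma sumT (y : ℕ) (hy : 2 ≤ y) : ∀ m, m ≤ y - 1 →
    ∑ i ∈ Finset.Icc 1 m, 1/((y:ℝ) - i) = harmonic' (y-1) - harmonic' (y-1-m) := by
  intro m
  induction m with
  | zero => simp
  | succ m ih =>
    intro hm
    rw [Finset.sum_Icc_succ_top (by omega), ih (by omega)]
    have h1 : y - 1 - m = (y - 1 - (m+1)) + 1 := by omega
    rw [h1, harmonic'_succ]
    have h2 : ((y - 1 - (m+1) : ℕ) : ℝ) = (y:ℝ) - m - 2 := by
      rw [Nat.cast_sub (by omega : m+1 ≤ y-1), Nat.cast_sub (by omega : (1:ℕ) ≤ y)]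
      push_cast; ring
    rw [h2]
    push_cast
    have h3 : (y:ℝ) - (m+1) = ((y:ℝ) - m - 2) + 1 := by ring
    rw [h3]
    ring

set_option maxHeartbeats 2000000 in
theorem hd_one_step_tail_estimate :
    ∃ C₁ C₂ : ℝ, 0 < C₁ ∧ 0 < C₂ ∧
      ∀ y : ℕ, 2 ≤ y → ∀ a : ℝ,
        -Real.log (1 - 1 / (y : ℝ)) ≤ a → a ≤ Real.log y →
          C₁ * (-Real.log (1 - Real.exp (-a))) / Real.log y
              ≤ ∑ i ∈ Finset.Icc 1 ⌊Real.exp (-a) * (y : ℝ)⌋₊, hdP y i ∧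
          ∑ i ∈ Finset.Icc 1 ⌊Real.exp (-a) * (y : ℝ)⌋₊, hdP y i
              ≤ C₂ * (-Real.log (1 - Real.exp (-a))) / Real.log y := by
  refine ⟨1/18, 3, by norm_num, by norm_num, ?_⟩
  intro y hy a ha1 ha2
  set x := Real.exp (-a) with hxdef
  have hyR : (2:ℝ) ≤ y := by exact_mod_cast hy
  have hy0 : (0:ℝ) < y := by linarith
  have hx0 : 0 < x := Real.exp_pos _
  have hiy0 : (0:ℝ) < 1/y := by positivity
  have h1y : (0:ℝ) < 1 - 1/y := by
    rw [sub_pos, div_lt_one hy0]; linarith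
  have hxu : x ≤ 1 - 1/(y:ℝ) := by
    have h : -a ≤ Real.log (1 - 1/y) := by linarith
    calc x ≤ Real.exp (Real.log (1-1/y)) := Real.exp_le_exp.mpr h
    _ = 1 - 1/y := Real.exp_log h1y
  have hxl : 1/(y:ℝ) ≤ x := by
    have h : -Real.log y ≤ -a := by linarith
    have h2 := Real.exp_le_exp.mpr h
    rwa [Real.exp_neg, Real.exp_log hy0, ← one_div] at h2
  have h1x : 0 < 1 - x := by linarith
  have hxy1 : (1:ℝ) ≤ x * y := by
    have h := mul_le_mul_of_nonneg_right hxl hy0.le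
    rwa [one_div, inv_mul_cancel₀ hy0.ne'] at h
  have hxyu : x * y ≤ (y:ℝ) - 1 := by
    have h := mul_le_mul_of_nonneg_right hxu hy0.le
    calc x*y ≤ (1 - 1/y)*y := h
    _ = y - 1 := by
        rw [sub_mul, one_mul, one_div, inv_mul_cancel₀ hy0.ne']
  set m := ⌊x * (y:ℝ)⌋₊ with hmdef
  have hm1 : 1 ≤ m := Nat.le_floor (by exact_mod_cast hxy1)
  have hmle : (m:ℝ) ≤ x * y := Nat.floor_le (by positivity)
  have hmge : x * y - 1 ≤ (m:ℝ) := by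
    have := Nat.lt_floor_add_one (x*(y:ℝ))
    rw [← hmdef] at this
    linarith
  have hmy : m ≤ y - 1 := by
    have h' : (m:ℝ) ≤ ((y-1:ℕ):ℝ) := by
      rw [Nat.cast_sub (by omega)]; push_cast; linarith
    exact_mod_cast h'
  set L := -Real.log (1 - x) with hLdef
  have hL0 : 0 ≤ L := by
    rw [hLdef, neg_nonneg]
    exact Real.log_nonpos (by linarith) (by linarith)
  have hexpL : Real.exp (-L) = 1 - x := by
    rw [hLdef, neg_neg, Real.exp_log h1x]
  have hxL : x ≤ L := by
    have h := Real.log_le_sub_one_of_pos h1x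
    rw [hLdef]; linarith
  -- rewrite the sum
  have hcast : ((y-1:ℕ):ℝ) = (y:ℝ) - 1 := by
    rw [Nat.cast_sub (by omega)]; norm_num
  have c1 : ((y-1-m:ℕ):ℝ) = (y:ℝ) - 1 - m := by
    rw [Nat.cast_sub hmy, hcast]
  set h := harmonic' (y-1) with hhdef
  set D := harmonic' (y-1) - harmonic' (y-1-m) with hDdef
  have hsum : ∑ i ∈ Finset.Icc 1 m, hdP y i = D / h := by
    have he : ∀ i ∈ Finset.Icc 1 m, hdP y i = (1/((y:ℝ) - i)) * (1/h) := by
      intro i _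
      rw [hdP, one_div_mul_one_div]
    rw [Finset.sum_congr rfl he, ← Finset.sum_mul, sumT y hy m hmy, mul_one_div]
  clear_value D h L m x
  -- bounds on h
  have hlogy : 0 < Real.log y := Real.log_pos (by linarith)
  have hlog2u : Real.log 2 < 0.6931471808 := Real.log_two_lt_d9
  have hlog2l : (0.6931471803:ℝ) < Real.log 2 := Real.log_two_gt_d9
  have hlogy2 : Real.log 2 ≤ Real.log y := Real.log_le_log (by norm_num) hyR
  have hhge : Real.log y ≤ h := by
    have hd := log_le_h_diff 0 (y-1) (Nat.zero_le _)
    rw [hcast, harmonic'_zero] at hd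
    norm_num at hd
    rw [hhdef]
    linarith [hd]
  have hh0 : 0 < h := lt_of_lt_of_le hlogy hhge
  have hhle : h ≤ 3 * Real.log y := by
    have hd := h_diff_le_log 1 le_rfl (y-1) (by omega)
    rw [hcast, harmonic'_one] at hd
    norm_num at hd
    have hlog1 : Real.log ((y:ℝ)-1) ≤ Real.log y := Real.log_le_log (by linarith) (by linarith)
    have h1 : (1:ℝ) ≤ 2 * Real.log 2 := by linarith
    linarith
  -- lower bounds on D
  have hyx1 : (1:ℝ) ≤ (y:ℝ)*(1-x) := by
    have h' := mul_le_mul_of_nonneg_left (show 1/(y:ℝ) ≤ 1-x by linarith) hy0.le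
    rwa [mul_one_div, div_self hy0.ne'] at h'
  have hymr : (0:ℝ) < (y:ℝ) - m := by linarith
  have hD1 : x/2 ≤ D := by
    have hd := h_diff_ge_card (y-1-m) (y-1) (by omega)
    rw [c1, hcast] at hd
    have e : ((y:ℝ)-1) - ((y:ℝ)-1-m) = m := by ring
    rw [e] at hd
    have hm2 : x*y/2 ≤ (m:ℝ) := by
      rcases le_or_gt (x*y) 2 with h'|h'
      · have : (1:ℝ) ≤ m := by exact_mod_cast hm1
        linarith
      · linarith
    have h3 : x/2 ≤ (m:ℝ)/((y:ℝ)-1) := by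
      rw [div_le_div_iff₀ (by norm_num) (by linarith)]
      nlinarith [hx0.le]
    linarith
  have hD2 : L - Real.log 2 ≤ D := by
    have hd := log_le_h_diff (y-1-m) (y-1) (by omega)
    rw [c1, hcast] at hd
    have e1 : (y:ℝ)-1+1 = y := by ring
    have e2 : (y:ℝ)-1-m+1 = (y:ℝ)-m := by ring
    rw [e1, e2] at hd
    have hub : (y:ℝ) - m ≤ 2*((y:ℝ)*(1-x)) := by
      have e3 : (y:ℝ)*(1-x) = y - x*y := by ring
      linarith
    have hlog : Real.log ((y:ℝ) - m) ≤ Real.log 2 + Real.log y + Real.log (1-x) := by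
      calc Real.log ((y:ℝ)-m) ≤ Real.log (2*((y:ℝ)*(1-x))) := Real.log_le_log hymr hub
      _ = Real.log 2 + (Real.log y + Real.log (1-x)) := by
          rw [Real.log_mul (by norm_num) (by positivity), Real.log_mul hy0.ne' h1x.ne']
      _ = Real.log 2 + Real.log y + Real.log (1-x) := by ring
    rw [hLdef]
    linarith
  have hDle_h : D ≤ h := by
    rw [hDdef, hhdef]
    linarith [harmonic'_nonneg (y-1-m)]
  have hDlow : L/6 ≤ D := by
    rcases le_or_gt L 2 with hc|hc
    · have h1 : L + 1 ≤ Real.exp L := Real.add_one_le_exp L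
      have h2 : (1-x) * Real.exp L = 1 := by
        rw [← hexpL, ← Real.exp_add]; simp
      have hexp1 : (1-x)*(L+1) ≤ 1 := by
        calc (1-x)*(L+1) ≤ (1-x)*Real.exp L := mul_le_mul_of_nonneg_left h1 h1x.le
        _ = 1 := h2
      have q1 : (1-x)*(L+1) = L + 1 - x*L - x := by ring
      have q2 : x*(2-L) = 2*x - x*L := by ring
      have q3 : 0 ≤ x*(2-L) := mul_nonneg hx0.le (by linarith)
      have hx3 : L/3 ≤ x := by linarith
      linarith
    · linarith
  constructor
  · rw [hsum]
    have e : (1/18) * L / Real.log y = (L/6)/(3*Real.log y) := by ring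
    rw [e]
    exact div_le_div₀ (by linarith) hDlow hh0 hhle
  · rw [hsum]
    rcases le_or_gt x (1/2) with hc|hc
    · -- D ≤ 2x ≤ 2L
      have hd := h_diff_le_card (y-1-m) (y-1) (by omega)
      rw [c1, hcast] at hd
      have e1 : ((y:ℝ)-1) - ((y:ℝ)-1-m) = m := by ring
      have e2 : (y:ℝ)-1-m+1 = (y:ℝ)-m := by ring
      rw [e1, e2] at hd
      have hym2 : (y:ℝ)/2 ≤ (y:ℝ) - m := by nlinarith
      have hmx : (m:ℝ)/((y:ℝ)-m) ≤ 2*x := by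
        rw [div_le_iff₀ hymr]
        nlinarith [hx0.le]
      have hU : D ≤ 3*L := by linarith
      exact div_le_div₀ (by linarith) hU hlogy hhge
    · have hLlog2 : Real.log 2 ≤ L := by
        have h' : Real.log (1-x) ≤ Real.log (1/2) := Real.log_le_log h1x (by linarith)
        rw [one_div, Real.log_inv] at h'
        rw [hLdef]; linarith
      rcases le_or_gt 2 ((y:ℝ)*(1-x)) with hc2|hc2
      · have hr : (1:ℝ) ≤ (y:ℝ)-1-m := by nlinarith
        have hnat : 1 ≤ y - 1 - m := by
          by_contra hcon
          push_neg at hcon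
          have h0 : y - 1 - m = 0 := by omega
          rw [h0] at c1
          norm_num at c1
          linarith
        have hd := h_diff_le_log (y-1-m) hnat (y-1) (by omega)
        rw [c1, hcast] at hd
        have hge : (y:ℝ)*(1-x)/2 ≤ (y:ℝ)-1-m := by nlinarith
        have hlog1 : Real.log ((y:ℝ)-1) ≤ Real.log y := Real.log_le_log (by linarith) (by linarith)
        have hlog2' : Real.log ((y:ℝ)*(1-x)/2) ≤ Real.log ((y:ℝ)-1-m) :=
          Real.log_le_log (by positivity) hge
        have hlogeq : Real.log ((y:ℝ)*(1-x)/2) = Real.log y + Real.log (1-x) - Real.log 2 := by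
          rw [Real.log_div (by positivity) (by norm_num), Real.log_mul hy0.ne' h1x.ne']
        have hU : D ≤ 3*L := by
          rw [hLdef] at hLlog2 ⊢
          linarith
        exact div_le_div₀ (by linarith) hU hlogy hhge
      · have hLy : Real.log y - Real.log 2 ≤ L := by
          have h1xle : 1 - x ≤ 2/(y:ℝ) := by
            rw [le_div_iff₀ hy0]; linarith
          have h' : Real.log (1-x) ≤ Real.log (2/(y:ℝ)) := Real.log_le_log h1x h1xle
          rw [Real.log_div (by norm_num) hy0.ne'] at h'
          rw [hLdef]; linarith
        have h3L : Real.log y ≤ 3*L := by linarith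
        calc D/h ≤ 1 := div_le_one_of_le₀ hDle_h hh0.le
        _ ≤ 3*L/Real.log y := by rw [le_div_iff₀ hlogy]; linarith
end

section
/- Define g(a) := (∫_a^∞ −log(1 − e^{−s}) ds) / (−log(1 − e^{−a})) for a > 0. Then g is nondecreasing on (0,∞), g(a) ≤ 1 for all a > 0, and g(a) → 1 as a → ∞. -/
open Real Filter Topology MeasureTheory

section MeanExcessAux
open Real Filter Topology MeasureTheory Set


lemma int_exp_Ioi {c : ℝ} (hc : 0 < c) (a : ℝ) :
    ∫ s in Set.Ioi a, Real.exp (-(c * s)) = Real.exp (-(c * a)) / c := by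
  have hderiv : ∀ x ∈ Set.Ici a,
      HasDerivAt (fun x => -Real.exp (-(c * x)) / c) (Real.exp (-(c * x))) x := by
    intro x _
    have h1 : HasDerivAt (fun x : ℝ => -(c * x)) (-c) x := by
      simpa using (hasDerivAt_id x).const_mul (-c)
    have h2 := h1.exp
    have h3 := h2.neg.div_const c
    exact h3.congr_deriv (by simp [hc.ne'])
  have hint : IntegrableOn (fun x => Real.exp (-(c * x))) (Set.Ioi a) := by
    simpa [neg_mul] using exp_neg_integrableOn_Ioi a hc
  have htend : Tendsto (fun x => -Real.exp (-(c * x)) / c) atTop (𝓝 0) := by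
    have h0 : Tendsto (fun x : ℝ => c * x) atTop atTop :=
      Tendsto.const_mul_atTop hc tendsto_id
    have := (tendsto_exp_neg_atTop_nhds_zero.comp h0).neg.div_const c
    simpa using this
  have := integral_Ioi_of_hasDerivAt_of_tendsto' hderiv hint htend
  rw [this]
  field_simp
  ring


lemma hasSum_S1 {x : ℝ} (h0 : 0 ≤ x) (h1 : x < 1) :
    HasSum (fun n : ℕ => x ^ (n + 1) / ((n : ℝ) + 1)) (-Real.log (1 - x)) := by
  have := Real.hasSum_pow_div_log_of_abs_lt_one (x := x) (by rwa [abs_of_nonneg h0])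
  convert this using 2 with n

lemma summable_geom' {x : ℝ} (h0 : 0 ≤ x) (h1 : x < 1) :
    Summable (fun n : ℕ => x ^ (n + 1)) := by
  simpa [pow_succ'] using (summable_geometric_of_lt_one h0 h1).mul_left x

lemma summable_S1 {x : ℝ} (h0 : 0 ≤ x) (h1 : x < 1) :
    Summable (fun n : ℕ => x ^ (n + 1) / ((n : ℝ) + 1)) := (hasSum_S1 h0 h1).summable

lemma summable_S2 {x : ℝ} (h0 : 0 ≤ x) (h1 : x < 1) :
    Summable (fun n : ℕ => x ^ (n + 1) / ((n : ℝ) + 1) ^ 2) := by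
  refine Summable.of_nonneg_of_le (fun n => by positivity) (fun n => ?_) (summable_geom' h0 h1)
  have hn : (1 : ℝ) ≤ ((n : ℝ) + 1) ^ 2 := by nlinarith [Nat.cast_nonneg (α := ℝ) n]
  calc x ^ (n + 1) / ((n : ℝ) + 1) ^ 2 ≤ x ^ (n + 1) / 1 := by
        gcongr
    _ = x ^ (n + 1) := div_one _

lemma exp_pow_aux (n : ℕ) (s : ℝ) :
    Real.exp (-(((n : ℝ) + 1) * s)) = Real.exp (-s) ^ (n + 1) := by
  rw [← Real.exp_nat_mul]
  congr 1
  push_cast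
  ring

lemma integral_eq {a : ℝ} (ha : 0 < a) :
    ∫ s in Set.Ioi a, -Real.log (1 - Real.exp (-s)) =
      ∑' n : ℕ, Real.exp (-a) ^ (n + 1) / ((n : ℝ) + 1) ^ 2 := by
  set F : ℕ → ℝ → ℝ := fun n s => Real.exp (-(((n : ℝ) + 1) * s)) / ((n : ℝ) + 1) with hF
  have hcpos : ∀ n : ℕ, (0 : ℝ) < (n : ℝ) + 1 := fun n => by positivity
  have hFnonneg : ∀ n : ℕ, ∀ s : ℝ, 0 ≤ F n s := fun n s => by
    simp only [hF]; positivity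
  have hFint : ∀ n : ℕ, Integrable (F n) (volume.restrict (Set.Ioi a)) := by
    intro n
    have h1 : IntegrableOn (fun s => Real.exp (-((n : ℝ) + 1) * s)) (Set.Ioi a) :=
      exp_neg_integrableOn_Ioi a (hcpos n)
    have h2 : IntegrableOn (fun s => Real.exp (-(((n : ℝ) + 1) * s))) (Set.Ioi a) := by
      simp only [neg_mul] at h1; exact h1
    exact h2.div_const _
  have hFval : ∀ n : ℕ, (∫ s in Set.Ioi a, F n s)
      = Real.exp (-a) ^ (n + 1) / ((n : ℝ) + 1) ^ 2 := by
    intro n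
    simp only [hF]
    rw [MeasureTheory.integral_div, int_exp_Ioi (hcpos n), exp_pow_aux, div_div, ← sq]
  have hx0 : (0 : ℝ) < Real.exp (-a) := Real.exp_pos _
  have hx1 : Real.exp (-a) < 1 := Real.exp_lt_one_iff.mpr (by linarith)
  have hcongr : ∫ s in Set.Ioi a, -Real.log (1 - Real.exp (-s))
      = ∫ s in Set.Ioi a, ∑' n : ℕ, F n s := by
    refine setIntegral_congr_fun measurableSet_Ioi (fun s hs => ?_)
    have hs0 : 0 < s := ha.trans hs
    have h0 : (0:ℝ) ≤ Real.exp (-s) := (Real.exp_pos _).le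
    have h1 : Real.exp (-s) < 1 := Real.exp_lt_one_iff.mpr (by linarith)
    rw [← (hasSum_S1 h0 h1).tsum_eq]
    refine tsum_congr (fun n => ?_)
    simp only [hF]
    rw [exp_pow_aux]
  have hsum : Summable fun n : ℕ => ∫ s in Set.Ioi a, ‖F n s‖ := by
    refine Summable.of_nonneg_of_le (fun n => ?_) (fun n => ?_) (summable_geom' hx0.le hx1)
    · exact integral_nonneg (fun s => norm_nonneg _)
    · have : (∫ s in Set.Ioi a, ‖F n s‖) = ∫ s in Set.Ioi a, F n s :=
        integral_congr_ae (Filter.Eventually.of_forall fun s => norm_of_nonneg (hFnonneg n s))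
      rw [this, hFval]
      have hn : (1 : ℝ) ≤ ((n : ℝ) + 1) ^ 2 := by nlinarith [Nat.cast_nonneg (α := ℝ) n]
      calc Real.exp (-a) ^ (n + 1) / ((n : ℝ) + 1) ^ 2
          ≤ Real.exp (-a) ^ (n + 1) / 1 := by gcongr
        _ = Real.exp (-a) ^ (n + 1) := div_one _
  rw [hcongr, ← MeasureTheory.integral_tsum_of_summable_integral_norm hFint hsum]
  exact tsum_congr hFval


lemma pair_aux {x y : ℝ} (hy0 : 0 ≤ y) (hyx : y ≤ x) {m n : ℕ} (hmn : m ≤ n) :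
    0 ≤ (y ^ (m + 1) / ((m : ℝ) + 1) ^ 2 * (x ^ (n + 1) / ((n : ℝ) + 1))
        - x ^ (m + 1) / ((m : ℝ) + 1) ^ 2 * (y ^ (n + 1) / ((n : ℝ) + 1)))
      + (y ^ (n + 1) / ((n : ℝ) + 1) ^ 2 * (x ^ (m + 1) / ((m : ℝ) + 1))
        - x ^ (n + 1) / ((n : ℝ) + 1) ^ 2 * (y ^ (m + 1) / ((m : ℝ) + 1))) := by
  have hx0 : 0 ≤ x := hy0.trans hyx
  set M : ℝ := (m : ℝ) + 1 with hM
  set N : ℝ := (n : ℝ) + 1 with hN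
  have hM0 : 0 < M := by positivity
  have hN0 : 0 < N := by positivity
  have hMN : M ≤ N := by
    simp only [hM, hN]
    exact add_le_add (Nat.cast_le.mpr hmn) le_rfl
  have hA : 0 ≤ y ^ (m + 1) * x ^ (n + 1) - x ^ (m + 1) * y ^ (n + 1) := by
    have e1 : x ^ (n + 1) = x ^ (m + 1) * x ^ (n - m) := by
      rw [← pow_add]; congr 1; omega
    have e2 : y ^ (n + 1) = y ^ (m + 1) * y ^ (n - m) := by
      rw [← pow_add]; congr 1; omega
    have key : y ^ (n - m) ≤ x ^ (n - m) := pow_le_pow_left₀ hy0 hyx _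
    rw [e1, e2]
    have h1 : 0 ≤ y ^ (m + 1) * x ^ (m + 1) := by positivity
    nlinarith [mul_le_mul_of_nonneg_left key h1]
  have hB : 1 / (N ^ 2 * M) ≤ 1 / (M ^ 2 * N) := by
    apply one_div_le_one_div_of_le (by positivity)
    have h3 : 0 ≤ M * N * (N - M) := by
      apply mul_nonneg (by positivity) (sub_nonneg.mpr hMN)
    nlinarith [h3]
  have hexpr : (y ^ (m + 1) / M ^ 2 * (x ^ (n + 1) / N)
        - x ^ (m + 1) / M ^ 2 * (y ^ (n + 1) / N))
      + (y ^ (n + 1) / N ^ 2 * (x ^ (m + 1) / M)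
        - x ^ (n + 1) / N ^ 2 * (y ^ (m + 1) / M))
      = (y ^ (m + 1) * x ^ (n + 1) - x ^ (m + 1) * y ^ (n + 1))
        * (1 / (M ^ 2 * N) - 1 / (N ^ 2 * M)) := by
    field_simp
    ring
  rw [hexpr]
  exact mul_nonneg hA (sub_nonneg.mpr hB)

lemma core_ineq {x y : ℝ} (hy0 : 0 ≤ y) (hyx : y ≤ x) (hx1 : x < 1) :
    (∑' n : ℕ, x ^ (n + 1) / ((n : ℝ) + 1) ^ 2) * (∑' n : ℕ, y ^ (n + 1) / ((n : ℝ) + 1))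
      ≤ (∑' n : ℕ, y ^ (n + 1) / ((n : ℝ) + 1) ^ 2)
        * (∑' n : ℕ, x ^ (n + 1) / ((n : ℝ) + 1)) := by
  have hx0 : 0 ≤ x := hy0.trans hyx
  have hy1 : y < 1 := lt_of_le_of_lt hyx hx1
  set f2x := fun n : ℕ => x ^ (n + 1) / ((n : ℝ) + 1) ^ 2 with hf2x
  set f1x := fun n : ℕ => x ^ (n + 1) / ((n : ℝ) + 1) with hf1x
  set f2y := fun n : ℕ => y ^ (n + 1) / ((n : ℝ) + 1) ^ 2 with hf2y
  set f1y := fun n : ℕ => y ^ (n + 1) / ((n : ℝ) + 1) with hf1y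
  have s2x := summable_S2 hx0 hx1
  have s1x := summable_S1 hx0 hx1
  have s2y := summable_S2 hy0 hy1
  have s1y := summable_S1 hy0 hy1
  have nn2x : 0 ≤ f2x := fun n => by simp only [hf2x]; positivity
  have nn1x : 0 ≤ f1x := fun n => by simp only [hf1x]; positivity
  have nn2y : 0 ≤ f2y := fun n => by simp only [hf2y]; positivity
  have nn1y : 0 ≤ f1y := fun n => by simp only [hf1y]; positivity
  have sL : Summable fun p : ℕ × ℕ => f2x p.1 * f1y p.2 :=
    s2x.mul_of_nonneg s1y nn2x nn1y
  have sR : Summable fun p : ℕ × ℕ => f2y p.1 * f1x p.2 :=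
    s2y.mul_of_nonneg s1x nn2y nn1x
  rw [Summable.tsum_mul_tsum s2x s1y sL, Summable.tsum_mul_tsum s2y s1x sR]
  set h : ℕ × ℕ → ℝ := fun p => f2y p.1 * f1x p.2 - f2x p.1 * f1y p.2 with hh
  have hsum : Summable h := sR.sub sL
  have hswap : Summable fun p : ℕ × ℕ => h (p.2, p.1) := by
    have : (fun p : ℕ × ℕ => h (p.2, p.1)) = h ∘ (Equiv.prodComm ℕ ℕ) := rfl
    rw [this, (Equiv.prodComm ℕ ℕ).summable_iff]
    exact hsum
  have hswap_eq : ∑' p : ℕ × ℕ, h (p.2, p.1) = ∑' p, h p := by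
    have := (Equiv.prodComm ℕ ℕ).tsum_eq h
    exact this
  have hpair : ∀ p : ℕ × ℕ, 0 ≤ h p + h (p.2, p.1) := by
    rintro ⟨m, n⟩
    rcases le_total m n with hmn | hnm
    · exact pair_aux hy0 hyx hmn
    · have := pair_aux hy0 hyx hnm
      simp only [hh, hf2x, hf1x, hf2y, hf1y]
      linarith
  have h2 : 0 ≤ ∑' p : ℕ × ℕ, (h p + h (p.2, p.1)) := tsum_nonneg hpair
  rw [Summable.tsum_add hsum hswap, hswap_eq] at h2
  have : 0 ≤ ∑' p, h p := by linarith
  have hts : ∑' p : ℕ × ℕ, h p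
      = (∑' p : ℕ × ℕ, f2y p.1 * f1x p.2) - ∑' p : ℕ × ℕ, f2x p.1 * f1y p.2 :=
    Summable.tsum_sub sR sL
  have final : 0 ≤ (∑' p : ℕ × ℕ, f2y p.1 * f1x p.2) - ∑' p : ℕ × ℕ, f2x p.1 * f1y p.2 :=
    hts ▸ this
  have := sub_nonneg.mp final
  exact this

/-- The normalized mean excess function of the measure `θ` with tail
`θ[a,∞) = -log(1 - e^{-a})`. -/
noncomputable def meanExcess (a : ℝ) : ℝ :=
  (∫ s in Set.Ioi a, -Real.log (1 - Real.exp (-s))) / (-Real.log (1 - Real.exp (-a)))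



lemma exp_mem {a : ℝ} (ha : 0 < a) : 0 < Real.exp (-a) ∧ Real.exp (-a) < 1 :=
  ⟨Real.exp_pos _, Real.exp_lt_one_iff.mpr (by linarith)⟩

lemma fpos {a : ℝ} (ha : 0 < a) : 0 < -Real.log (1 - Real.exp (-a)) := by
  obtain ⟨h0, h1⟩ := exp_mem ha
  have : Real.log (1 - Real.exp (-a)) < 0 := Real.log_neg (by linarith) (by linarith)
  linarith

lemma meanExcess_eq {a : ℝ} (ha : 0 < a) :
    meanExcess a = (∑' n : ℕ, Real.exp (-a) ^ (n + 1) / ((n : ℝ) + 1) ^ 2)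
      / (-Real.log (1 - Real.exp (-a))) := by
  rw [meanExcess, integral_eq ha]

theorem meanExcess_mono_le_one_tendsto_one :
    MonotoneOn meanExcess (Set.Ioi 0) ∧
    (∀ a : ℝ, 0 < a → meanExcess a ≤ 1) ∧
    Filter.Tendsto meanExcess Filter.atTop (𝓝 1) := by
  have le_one : ∀ a : ℝ, 0 < a → meanExcess a ≤ 1 := by
    intro a ha
    obtain ⟨hx0, hx1⟩ := exp_mem ha
    rw [meanExcess_eq ha, div_le_one (fpos ha), ← (hasSum_S1 hx0.le hx1).tsum_eq]
    refine Summable.tsum_le_tsum (fun n => ?_) (summable_S2 hx0.le hx1) (hasSum_S1 hx0.le hx1).summable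
    apply div_le_div_of_nonneg_left (by positivity) (by positivity)
    nlinarith [Nat.cast_nonneg (α := ℝ) n]
  have lower : ∀ a : ℝ, 0 < a → 1 - Real.exp (-a) ≤ meanExcess a := by
    intro a ha
    obtain ⟨hx0, hx1⟩ := exp_mem ha
    set x := Real.exp (-a) with hx
    rw [meanExcess_eq ha, le_div_iff₀ (fpos ha)]
    have hL : -Real.log (1 - x) ≤ x * (1 - x)⁻¹ := by
      refine hasSum_le (fun n => ?_) (hasSum_S1 hx0.le hx1)
        ((hasSum_geometric_of_lt_one hx0.le hx1).mul_left x)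
      rw [← pow_succ']
      apply div_le_self (by positivity)
      have := Nat.cast_nonneg (α := ℝ) n
      linarith
    have hS2 : x ≤ ∑' n : ℕ, x ^ (n + 1) / ((n : ℝ) + 1) ^ 2 := by
      have h := Summable.le_tsum (summable_S2 hx0.le hx1) 0 (fun j _ => by positivity)
      simpa using h
    have h1x : 0 < 1 - x := by linarith
    calc (1 - x) * (-Real.log (1 - x)) ≤ (1 - x) * (x * (1 - x)⁻¹) := by
          exact mul_le_mul_of_nonneg_left hL h1x.le
      _ = x := by field_simp
      _ ≤ _ := hS2
  refine ⟨?_, le_one, ?_⟩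
  · intro a ha b hb hab
    simp only [Set.mem_Ioi] at ha hb
    obtain ⟨hx0, hx1⟩ := exp_mem ha
    obtain ⟨hy0, hy1⟩ := exp_mem hb
    have hyx : Real.exp (-b) ≤ Real.exp (-a) := Real.exp_le_exp.mpr (by linarith)
    rw [meanExcess_eq ha, meanExcess_eq hb, div_le_div_iff₀ (fpos ha) (fpos hb),
      ← (hasSum_S1 hx0.le hx1).tsum_eq, ← (hasSum_S1 hy0.le hy1).tsum_eq]
    exact core_ineq hy0.le hyx hx1
  · have tlow : Tendsto (fun a : ℝ => 1 - Real.exp (-a)) atTop (𝓝 1) := by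
      have := tendsto_const_nhds (x := (1:ℝ)) (f := atTop).sub tendsto_exp_neg_atTop_nhds_zero
      simpa using this
    refine tendsto_of_tendsto_of_tendsto_of_le_of_le' tlow tendsto_const_nhds ?_ ?_
    · filter_upwards [eventually_gt_atTop (0:ℝ)] with a ha using lower a ha
    · filter_upwards [eventually_gt_atTop (0:ℝ)] with a ha using le_one a ha

end MeanExcessAux
end

section
/- For every integer x ≥ 2, Σ_{i=1}^{x−1} (1/(x−i))·(i^{−1/2} − x^{−1/2}) ≤ 2·x^{−1/2}. -/
open Real Filter Topology MeasureTheory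

lemma sum_inv_sqrt (n : ℕ) :
    ∑ i ∈ Finset.Ico 1 (n + 1), (Real.sqrt i)⁻¹ ≤ 2 * Real.sqrt n := by
  induction n with
  | zero => simp
  | succ n ih =>
    rw [Finset.sum_Ico_succ_top (by omega)]
    have h1 : (0:ℝ) < Real.sqrt ((n:ℝ) + 1) := by positivity
    have h2 : (Real.sqrt ((n:ℝ) + 1)) ^ 2 = (n:ℝ) + 1 := Real.sq_sqrt (by positivity)
    have h3 : (Real.sqrt (n:ℝ)) ^ 2 = (n:ℝ) := Real.sq_sqrt (by positivity)
    have h0 : (0:ℝ) ≤ Real.sqrt (n:ℝ) := Real.sqrt_nonneg _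
    have key : (Real.sqrt ((n+1 : ℕ) : ℝ))⁻¹ ≤ 2 * Real.sqrt ((n:ℝ)+1) - 2 * Real.sqrt (n:ℝ) := by
      push_cast
      rw [inv_eq_one_div, div_le_iff₀ h1]
      nlinarith [sq_nonneg (Real.sqrt ((n:ℝ)+1) - Real.sqrt (n:ℝ))]
    push_cast at ih key ⊢
    linarith

lemma termwise (x i : ℕ) (h1 : 1 ≤ i) (h2 : i < x) :
    (1 / ((x : ℝ) - (i : ℝ))) * ((Real.sqrt i)⁻¹ - (Real.sqrt x)⁻¹)
      ≤ ((x : ℝ) * Real.sqrt i)⁻¹ := by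
  set a := Real.sqrt i with ha
  set b := Real.sqrt x with hb
  have hi : (0:ℝ) < i := by exact_mod_cast h1
  have hxp : (0:ℝ) < x := by exact_mod_cast (by omega : 0 < x)
  have hap : (0:ℝ) < a := Real.sqrt_pos.mpr hi
  have hbp : (0:ℝ) < b := Real.sqrt_pos.mpr hxp
  have hab : a < b := Real.sqrt_lt_sqrt hi.le (by exact_mod_cast h2)
  have ha2 : a ^ 2 = (i:ℝ) := Real.sq_sqrt hi.le
  have hb2 : b ^ 2 = (x:ℝ) := Real.sq_sqrt hxp.le
  rw [← ha2, ← hb2]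
  have e1 : (1 / (b^2 - a^2)) * (a⁻¹ - b⁻¹) = ((b + a) * a * b)⁻¹ := by
    have hne : b^2 - a^2 ≠ 0 := by nlinarith
    field_simp
    ring
  rw [e1]
  apply inv_anti₀ (by positivity)
  nlinarith

theorem hd_drift_bound_inv_sqrt (x : ℕ) (hx : 2 ≤ x) :
    ∑ i ∈ Finset.Ico 1 x,
        (1 / ((x : ℝ) - (i : ℝ))) * ((Real.sqrt i)⁻¹ - (Real.sqrt x)⁻¹)
      ≤ 2 * (Real.sqrt x)⁻¹ := by
  have hxp : (0:ℝ) < x := by positivity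
  have step1 : ∑ i ∈ Finset.Ico 1 x,
      (1 / ((x : ℝ) - (i : ℝ))) * ((Real.sqrt i)⁻¹ - (Real.sqrt x)⁻¹)
      ≤ ∑ i ∈ Finset.Ico 1 x, ((x : ℝ) * Real.sqrt i)⁻¹ := by
    apply Finset.sum_le_sum
    intro i hi
    rw [Finset.mem_Ico] at hi
    exact termwise x i hi.1 hi.2
  have step2 : ∑ i ∈ Finset.Ico 1 x, ((x : ℝ) * Real.sqrt i)⁻¹
      = (x : ℝ)⁻¹ * ∑ i ∈ Finset.Ico 1 x, (Real.sqrt i)⁻¹ := by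
    rw [Finset.mul_sum]
    congr 1; ext i; rw [mul_inv]
  have step3 : ∑ i ∈ Finset.Ico 1 x, (Real.sqrt i)⁻¹ ≤ 2 * Real.sqrt x := by
    have hx1 : x = (x - 1) + 1 := by omega
    calc ∑ i ∈ Finset.Ico 1 x, (Real.sqrt i)⁻¹
        = ∑ i ∈ Finset.Ico 1 ((x-1) + 1), (Real.sqrt i)⁻¹ := by rw [← hx1]
      _ ≤ 2 * Real.sqrt (x - 1 : ℕ) := sum_inv_sqrt _
      _ ≤ 2 * Real.sqrt x := by
          gcongr
          exact_mod_cast Nat.sub_le x 1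
  have hs2 : Real.sqrt x * Real.sqrt x = (x:ℝ) := Real.mul_self_sqrt hxp.le
  have hsp : (0:ℝ) < Real.sqrt x := Real.sqrt_pos.mpr hxp
  calc ∑ i ∈ Finset.Ico 1 x,
        (1 / ((x : ℝ) - (i : ℝ))) * ((Real.sqrt i)⁻¹ - (Real.sqrt x)⁻¹)
      ≤ (x : ℝ)⁻¹ * ∑ i ∈ Finset.Ico 1 x, (Real.sqrt i)⁻¹ := by rw [← step2]; exact step1
    _ ≤ (x : ℝ)⁻¹ * (2 * Real.sqrt x) := by
        apply mul_le_mul_of_nonneg_left step3 (by positivity)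
    _ = 2 * (Real.sqrt x)⁻¹ := by
        field_simp
        nlinarith [hs2]
end

section
/- There exists a constant K < ∞ such that for all integers 1 ≤ i < L < n, Σ_{j=L+1}^n a(n,j)·p(j,i) ≤ K/(log L − log i). -/
open Real Filter Topology MeasureTheory

lemma harmonic'_pos_s13 {m : ℕ} (hm : 1 ≤ m) : 0 < harmonic' m := by
  apply Finset.sum_pos
  · intro i hi
    simp only [Finset.mem_Icc] at hi
    have : (0:ℝ) < i := by exact_mod_cast hi.1
    positivity
  · exact ⟨1, by simp [hm]⟩

lemma hdP_pos_s13 {i j : ℕ} (hi : 1 ≤ i) (hij : i < j) : 0 < hdP j i := by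
  unfold hdP
  have h1 : (0:ℝ) < (j:ℝ) - (i:ℝ) := by
    have := (Nat.cast_lt (α := ℝ)).2 hij; linarith
  have h2 : 0 < harmonic' (j - 1) := harmonic'_pos_s13 (by omega)
  positivity

lemma hdP_mono {i i' j : ℕ} (hi : 1 ≤ i) (hii' : i ≤ i') (h : i' < j) :
    hdP j i ≤ hdP j i' := by
  unfold hdP
  have h2 : 0 < harmonic' (j - 1) := harmonic'_pos_s13 (by omega)
  have c1 : (0:ℝ) < (j:ℝ) - (i':ℝ) := by
    have := (Nat.cast_lt (α := ℝ)).2 h; linarith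
  have c2 : (j:ℝ) - (i':ℝ) ≤ (j:ℝ) - (i:ℝ) := by
    have := (Nat.cast_le (α := ℝ)).2 hii'; linarith
  gcongr

/-- Row sums of `hdP` equal 1. -/
lemma hdP_row_sum {j : ℕ} (hj : 2 ≤ j) :
    ∑ i ∈ Finset.Icc 1 (j - 1), hdP j i = 1 := by
  have h2 : 0 < harmonic' (j - 1) := harmonic'_pos_s13 (by omega)
  have key : ∑ i ∈ Finset.Icc 1 (j - 1), hdP j i
      = (∑ i ∈ Finset.Icc 1 (j - 1), (1:ℝ) / (j - i)) / harmonic' (j - 1) := by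
    rw [Finset.sum_div]
    apply Finset.sum_congr rfl
    intro i hi
    unfold hdP
    rw [div_div]
  rw [key]
  have reindex : ∑ i ∈ Finset.Icc 1 (j - 1), (1:ℝ) / ((j:ℝ) - (i:ℝ))
      = ∑ m ∈ Finset.Icc 1 (j - 1), (1:ℝ) / (m:ℝ) := by
    apply Finset.sum_nbij' (fun i => j - i) (fun m => j - m)
    · intro i hi; simp only [Finset.mem_Icc] at *; omega
    · intro m hm; simp only [Finset.mem_Icc] at *; omega
    · intro i hi; simp only [Finset.mem_Icc] at hi; omega
    · intro m hm; simp only [Finset.mem_Icc] at hm; omega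
    · intro i hi
      simp only [Finset.mem_Icc] at hi
      congr 1
      rw [Nat.cast_sub (by omega)]
  rw [reindex]
  have : harmonic' (j-1) = ∑ m ∈ Finset.Icc 1 (j - 1), (1:ℝ) / (m:ℝ) := rfl
  rw [← this, div_self (ne_of_gt h2)]

section occ
variable (a : ℕ → ℕ → ℝ)
    (ha_diag : ∀ n : ℕ, 1 ≤ n → a n n = 1)
    (ha_rec : ∀ n i : ℕ, 1 ≤ i → i < n →
      a n i = ∑ j ∈ Finset.Ioc i n, a n j * hdP j i)

include ha_diag ha_rec in
lemma a_nonneg : ∀ k n i : ℕ, 1 ≤ i → i ≤ n → n - i ≤ k → 0 ≤ a n i := by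
  intro k
  induction k with
  | zero =>
    intro n i hi hin hk
    have : i = n := by omega
    subst this
    rw [ha_diag i hi]; norm_num
  | succ k ih =>
    intro n i hi hin hk
    rcases eq_or_lt_of_le hin with h | h
    · subst h; rw [ha_diag i hi]; norm_num
    · rw [ha_rec n i hi h]
      apply Finset.sum_nonneg
      intro j hj
      simp only [Finset.mem_Ioc] at hj
      have h1 : 0 ≤ a n j := ih n j (by omega) hj.2 (by omega)
      exact mul_nonneg h1 (hdP_pos_s13 hi hj.1).le

include ha_diag ha_rec in
lemma T_eq_one : ∀ d n L : ℕ, 1 ≤ L → L + 1 + d = n →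
    ∑ i ∈ Finset.Icc 1 L, ∑ j ∈ Finset.Ioc L n, a n j * hdP j i = 1 := by
  intro d
  induction d with
  | zero =>
    intro n L hL hn
    have hIoc : Finset.Ioc L n = {L + 1} := by
      ext x; simp only [Finset.mem_Ioc, Finset.mem_singleton]; omega
    rw [hIoc]
    simp only [Finset.sum_singleton]
    have hd : a n (L + 1) = 1 := by rw [← hn]; exact ha_diag (L+1) (by omega)
    simp only [hd, one_mul]
    have := hdP_row_sum (j := L + 1) (by omega)
    simpa using this
  | succ d ih =>
    intro n L hL hn
    have hLn : L + 1 < n := by omega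
    have hsplit : Finset.Ioc L n = insert (L+1) (Finset.Ioc (L+1) n) := by
      ext x
      simp only [Finset.mem_Ioc, Finset.mem_insert]
      omega
    have hnotmem : (L+1) ∉ Finset.Ioc (L+1) n := by simp
    have step : ∀ i : ℕ, ∑ j ∈ Finset.Ioc L n, a n j * hdP j i
        = a n (L+1) * hdP (L+1) i + ∑ j ∈ Finset.Ioc (L+1) n, a n j * hdP j i := by
      intro i
      rw [hsplit, Finset.sum_insert hnotmem]
    simp only [step]
    rw [Finset.sum_add_distrib, ← Finset.mul_sum]
    have hrow : ∑ i ∈ Finset.Icc 1 L, hdP (L+1) i = 1 := by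
      have := hdP_row_sum (j := L + 1) (by omega)
      simpa using this
    rw [hrow, mul_one]
    -- the second sum
    have hIcc : Finset.Icc 1 (L+1) = insert (L+1) (Finset.Icc 1 L) := by
      ext x
      simp only [Finset.mem_Icc, Finset.mem_insert]
      omega
    have hIH := ih n (L+1) (by omega) (by omega)
    rw [hIcc, Finset.sum_insert (by simp)] at hIH
    have hrecL : ∑ j ∈ Finset.Ioc (L+1) n, a n j * hdP j (L+1) = a n (L+1) :=
      (ha_rec n (L+1) (by omega) hLn).symm
    rw [hrecL] at hIH
    linarith

end occ

theorem hd_first_entrance_bound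
    (a : ℕ → ℕ → ℝ)
    (ha_diag : ∀ n : ℕ, 1 ≤ n → a n n = 1)
    (ha_rec : ∀ n i : ℕ, 1 ≤ i → i < n →
      a n i = ∑ j ∈ Finset.Ioc i n, a n j * hdP j i) :
    ∃ K : ℝ, ∀ n L i : ℕ, 1 ≤ i → i < L → L < n →
      ∑ j ∈ Finset.Ioc L n, a n j * hdP j i ≤ K / (Real.log L - Real.log i) := by
  refine ⟨1, fun n L i hi hiL hLn => ?_⟩
  set S : ℕ → ℝ := fun i' => ∑ j ∈ Finset.Ioc L n, a n j * hdP j i' with hS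
  have hanonneg : ∀ j ∈ Finset.Ioc L n, 0 ≤ a n j := by
    intro j hj
    simp only [Finset.mem_Ioc] at hj
    exact a_nonneg a ha_diag ha_rec (n - j) n j (by omega) hj.2 le_rfl
  have hS_nonneg : ∀ i' : ℕ, 1 ≤ i' → i' ≤ L → 0 ≤ S i' := by
    intro i' h1 h2
    apply Finset.sum_nonneg
    intro j hj
    simp only [Finset.mem_Ioc] at hj
    exact mul_nonneg (hanonneg j (by simp [Finset.mem_Ioc]; omega))
      (hdP_pos_s13 h1 (by omega)).le
  have hmono : ∀ i' ∈ Finset.Icc i L, S i ≤ S i' := by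
    intro i' hi'
    simp only [Finset.mem_Icc] at hi'
    apply Finset.sum_le_sum
    intro j hj
    simp only [Finset.mem_Ioc] at hj
    exact mul_le_mul_of_nonneg_left (hdP_mono hi hi'.1 (by omega))
      (hanonneg j (by simp [Finset.mem_Ioc]; omega))
  -- card bound
  have hcard : (Finset.Icc i L).card = L + 1 - i := Nat.card_Icc i L
  have h1 : ((L + 1 - i : ℕ) : ℝ) * S i ≤ ∑ i' ∈ Finset.Icc i L, S i' := by
    calc ((L + 1 - i : ℕ) : ℝ) * S i = ∑ _i' ∈ Finset.Icc i L, S i := by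
          rw [Finset.sum_const, hcard, nsmul_eq_mul]
      _ ≤ ∑ i' ∈ Finset.Icc i L, S i' := Finset.sum_le_sum hmono
  have h2 : ∑ i' ∈ Finset.Icc i L, S i' ≤ ∑ i' ∈ Finset.Icc 1 L, S i' := by
    apply Finset.sum_le_sum_of_subset_of_nonneg
    · intro x hx
      simp only [Finset.mem_Icc] at *
      omega
    · intro x hx _
      simp only [Finset.mem_Icc] at hx
      exact hS_nonneg x hx.1 hx.2
  have hT : ∑ i' ∈ Finset.Icc 1 L, S i' = 1 :=
    T_eq_one a ha_diag ha_rec (n - L - 1) n L (by omega) (by omega)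
  have hkey : ((L + 1 - i : ℕ) : ℝ) * S i ≤ 1 := by
    rw [← hT]; exact le_trans h1 h2
  -- log bound
  have hipos : (0:ℝ) < i := by exact_mod_cast hi
  have hiLreal : (i:ℝ) < L := by exact_mod_cast hiL
  have hlog_eq : Real.log L - Real.log i = Real.log ((L:ℝ) / i) := by
    rw [Real.log_div (Nat.cast_ne_zero.mpr (by omega)) (Nat.cast_ne_zero.mpr (by omega))]
  have hlog_pos : 0 < Real.log L - Real.log i := by
    rw [hlog_eq]
    apply Real.log_pos
    rw [lt_div_iff₀ hipos]; linarith
  have hdiv_le : (L:ℝ) / i ≤ ((L + 1 - i : ℕ) : ℝ) := by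
    have hc : ((L + 1 - i : ℕ) : ℝ) = (L:ℝ) + 1 - i := by
      push_cast [Nat.cast_sub (by omega : i ≤ L + 1)]; ring
    rw [hc, div_le_iff₀ hipos]
    have h1i : (1:ℝ) ≤ i := by exact_mod_cast hi
    nlinarith [mul_nonneg (by linarith : (0:ℝ) ≤ (i:ℝ) - 1) (by linarith : (0:ℝ) ≤ (L:ℝ) - i)]
  have hlog_le : Real.log L - Real.log i ≤ ((L + 1 - i : ℕ) : ℝ) := by
    rw [hlog_eq]
    have := Real.log_le_sub_one_of_pos (x := (L:ℝ)/i) (div_pos (by linarith) hipos)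
    linarith
  -- conclude
  have hSle : S i ≤ 1 / ((L + 1 - i : ℕ) : ℝ) := by
    have hcpos : (0:ℝ) < ((L + 1 - i : ℕ) : ℝ) := by
      have : 0 < L + 1 - i := by omega
      exact_mod_cast this
    rw [le_div_iff₀ hcpos, mul_comm]
    exact hkey
  calc S i ≤ 1 / ((L + 1 - i : ℕ) : ℝ) := hSle
    _ ≤ 1 / (Real.log L - Real.log i) :=
        one_div_le_one_div_of_le hlog_pos hlog_le
end
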